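/- arXiv:1408.1886 — 2 statements merged into one kernel-verified Lean document; each statement's English description precedes it below -/
import Mathlib

section
/- Let c(n) be the number of permutations of [n] all of whose alternating runs have length less than 3 and whose last alternating run has length 1 (for n ≥ 2 this means: every i ∈ {1,…,n−2} has i or i+1 an alternating descent, and n−1 is an alternating descent; c(0)=0, c(1)=1). Then in ℚ⟦X⟧: (Σ_{n=0}^∞ (E_{3n}·X^{3n}/(3n)! − E_{3n+1}·X^{3n+1}/(3n+1)!)) · (Σ_{n=0}^∞ c(n)·Xⁿ/n!) = Σ_{n=0}^∞ (E_{3n+1}·X^{3n+1}/(3n+1)! − E_{3n+2}·X^{3n+2}/(3n+2)!). -/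
/-- The entry of the permutation `σ` of `[n]` at (1-based) position `i`,
as a value in `{1, …, n}`; `0` if `i` is out of range. -/
def permEnt {n : ℕ} (σ : Equiv.Perm (Fin n)) (i : ℕ) : ℕ :=
  if h : 1 ≤ i ∧ i ≤ n then (σ ⟨i - 1, by omega⟩ : ℕ) + 1 else 0

/-- `i` is a descent of `σ`: `1 ≤ i ≤ n−1` and `π_i > π_{i+1}`. -/
def IsDescent {n : ℕ} (σ : Equiv.Perm (Fin n)) (i : ℕ) : Prop :=
  1 ≤ i ∧ i < n ∧ permEnt σ (i + 1) < permEnt σ i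

/-- `i` is an alternating descent of `σ`: `i` odd with `π_i > π_{i+1}`,
or `i` even with `π_i < π_{i+1}`. -/
def IsAltDescent {n : ℕ} (σ : Equiv.Perm (Fin n)) (i : ℕ) : Prop :=
  1 ≤ i ∧ i < n ∧
    ((i % 2 = 1 ∧ permEnt σ (i + 1) < permEnt σ i) ∨
     (i % 2 = 0 ∧ permEnt σ i < permEnt σ (i + 1)))

instance {n : ℕ} (σ : Equiv.Perm (Fin n)) (i : ℕ) : Decidable (IsDescent σ i) := by
  unfold IsDescent; infer_instance

instance {n : ℕ} (σ : Equiv.Perm (Fin n)) (i : ℕ) : Decidable (IsAltDescent σ i) := by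
  unfold IsAltDescent; infer_instance

/-- `i` is a peak of `σ`: `2 ≤ i ≤ n−1` and `π_{i−1} < π_i > π_{i+1}`. -/
def IsPeak {n : ℕ} (σ : Equiv.Perm (Fin n)) (i : ℕ) : Prop :=
  2 ≤ i ∧ i < n ∧ permEnt σ (i - 1) < permEnt σ i ∧ permEnt σ (i + 1) < permEnt σ i

/-- `i` is a valley of `σ`: `2 ≤ i ≤ n−1` and `π_{i−1} > π_i < π_{i+1}`. -/
def IsValley {n : ℕ} (σ : Equiv.Perm (Fin n)) (i : ℕ) : Prop :=
  2 ≤ i ∧ i < n ∧ permEnt σ i < permEnt σ (i - 1) ∧ permEnt σ i < permEnt σ (i + 1)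

/-- All valleys of `σ` are even and all peaks of `σ` are odd. -/
def GoodPerm {n : ℕ} (σ : Equiv.Perm (Fin n)) : Prop :=
  (∀ i, IsValley σ i → i % 2 = 0) ∧ (∀ i, IsPeak σ i → i % 2 = 1)

/-- `f n` is the number of permutations of `[n]` with all valleys even and all peaks odd. -/
noncomputable def fCount (n : ℕ) : ℕ :=
  Nat.card {σ : Equiv.Perm (Fin n) // GoodPerm σ}

/-- `g n` is the number of permutations of `[n]` with all valleys even and all peaks odd
having no descent at position `n − 1`. -/
noncomputable def gCount (n : ℕ) : ℕ :=
  Nat.card {σ : Equiv.Perm (Fin n) // GoodPerm σ ∧ ¬ IsDescent σ (n - 1)}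

/-- `σ` is an alternating permutation: `π₁ > π₂ < π₃ > π₄ < ⋯`. -/
def IsAltPerm {n : ℕ} (σ : Equiv.Perm (Fin n)) : Prop :=
  ∀ i, 1 ≤ i → i < n →
    (i % 2 = 1 → permEnt σ (i + 1) < permEnt σ i) ∧
    (i % 2 = 0 → permEnt σ i < permEnt σ (i + 1))

/-- The Euler number `Eₙ`, the number of alternating permutations of `[n]`. -/
noncomputable def eulerNum (n : ℕ) : ℕ :=
  Nat.card {σ : Equiv.Perm (Fin n) // IsAltPerm σ}

/-- `cCount n`: the number of permutations of `[n]` all of whose alternating runs have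
length less than 3 and whose last alternating run has length 1. -/
noncomputable def cCount (n : ℕ) : ℕ :=
  Nat.card {σ : Equiv.Perm (Fin n) //
    (∀ i, 1 ≤ i → i ≤ n - 2 → (IsAltDescent σ i ∨ IsAltDescent σ (i + 1))) ∧
    (n = 1 ∨ IsAltDescent σ (n - 1))}


/-! ### Auxiliary development -/

section Aux

open Equiv Finset

/-- the comparison word of a permutation -/
def wrd {n : ℕ} (σ : Equiv.Perm (Fin n)) : ℕ → Bool :=
  fun i => decide (permEnt σ i < permEnt σ (i + 1))

lemma permEnt_eq {n : ℕ} (σ : Equiv.Perm (Fin n)) {i : ℕ} (h1 : 1 ≤ i) (h2 : i ≤ n) :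
    permEnt σ i = (σ ⟨i - 1, by omega⟩ : ℕ) + 1 := by
  unfold permEnt
  rw [dif_pos ⟨h1, h2⟩]

lemma permEnt_ne {n : ℕ} (σ : Equiv.Perm (Fin n)) {i : ℕ} (h1 : 1 ≤ i) (h2 : i < n) :
    permEnt σ i ≠ permEnt σ (i + 1) := by
  rw [permEnt_eq σ h1 (by omega), permEnt_eq σ (by omega) (by omega)]
  intro h
  have h2' : σ ⟨i - 1, by omega⟩ = σ ⟨i + 1 - 1, by omega⟩ := by
    apply Fin.val_injective; omega
  have := σ.injective h2'
  have : i - 1 = i + 1 - 1 := congrArg Fin.val this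
  omega

lemma isAltDescent_iff_wrd {n : ℕ} (σ : Equiv.Perm (Fin n)) (i : ℕ) :
    IsAltDescent σ i ↔ (1 ≤ i ∧ i < n ∧ wrd σ i = decide (i % 2 = 0)) := by
  unfold IsAltDescent wrd
  constructor
  · rintro ⟨h1, h2, h3 | h3⟩
    · refine ⟨h1, h2, ?_⟩
      have hne := permEnt_ne σ h1 h2
      simp only [decide_eq_decide, decide_eq_true_eq]
      constructor
      · intro h; omega
      · intro h; omega
    · refine ⟨h1, h2, ?_⟩
      simp only [decide_eq_decide, decide_eq_true_eq]
      constructor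
      · intro _; exact h3.1
      · intro _; exact h3.2
  · rintro ⟨h1, h2, h3⟩
    refine ⟨h1, h2, ?_⟩
    have hne := permEnt_ne σ h1 h2
    simp only [decide_eq_decide, decide_eq_true_eq] at h3
    rcases Nat.even_or_odd i with he | ho
    · have h0 : i % 2 = 0 := Nat.even_iff.1 he
      right; exact ⟨h0, h3.2 h0⟩
    · have h0 : i % 2 = 1 := Nat.odd_iff.1 ho
      left; refine ⟨h0, ?_⟩
      have : ¬ (permEnt σ i < permEnt σ (i+1)) := by
        intro hl; have := h3.1 hl; omega
      omega

lemma isAltPerm_iff_wrd {n : ℕ} (σ : Equiv.Perm (Fin n)) :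
    IsAltPerm σ ↔ ∀ i, 1 ≤ i → i < n → wrd σ i = decide (i % 2 = 0) := by
  unfold IsAltPerm
  constructor
  · intro h i h1 h2
    obtain ⟨ha, hb⟩ := h i h1 h2
    have hne := permEnt_ne σ h1 h2
    unfold wrd
    simp only [decide_eq_decide, decide_eq_true_eq]
    constructor
    · intro hl
      by_contra h0
      have : i % 2 = 1 := by omega
      have := ha this; omega
    · intro h0; exact hb h0
  · intro h i h1 h2
    have hw := h i h1 h2
    unfold wrd at hw
    simp only [decide_eq_decide, decide_eq_true_eq] at hw
    have hne := permEnt_ne σ h1 h2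
    constructor
    · intro ho
      have : ¬ (permEnt σ i < permEnt σ (i+1)) := by
        intro hl; have := hw.1 hl; omega
      omega
    · intro he; exact hw.2 he

end Aux

section Aux2

open Equiv Finset

/-- generic count of permutations satisfying a predicate -/
noncomputable def cnt (n : ℕ) (R : Equiv.Perm (Fin n) → Prop) : ℕ :=
  Nat.card {σ : Equiv.Perm (Fin n) // R σ}

lemma cnt_congr {n : ℕ} {R S : Equiv.Perm (Fin n) → Prop} (h : ∀ σ, R σ ↔ S σ) :
    cnt n R = cnt n S := by
  unfold cnt
  exact Nat.card_congr (Equiv.subtypeEquiv (Equiv.refl _) (fun σ => h σ))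

lemma cnt_split {n : ℕ} (R S : Equiv.Perm (Fin n) → Prop) :
    cnt n R = cnt n (fun σ => R σ ∧ S σ) + cnt n (fun σ => R σ ∧ ¬ S σ) := by
  classical
  unfold cnt
  simp only [Nat.card_eq_fintype_card, Fintype.card_subtype]
  rw [← Finset.card_filter_add_card_filter_not (s := Finset.univ.filter R) S]
  congr 1 <;> · rw [Finset.filter_filter]

lemma cnt_true (n : ℕ) : cnt n (fun _ => True) = n.factorial := by
  unfold cnt
  rw [Nat.card_congr (Equiv.subtypeUnivEquiv (fun _ => trivial))]
  simp [Nat.card_eq_fintype_card, Fintype.card_perm]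

lemma cnt_false (n : ℕ) (R : Equiv.Perm (Fin n) → Prop) (h : ∀ σ, ¬ R σ) : cnt n R = 0 := by
  have : IsEmpty {σ : Equiv.Perm (Fin n) // R σ} := ⟨fun x => h x.1 x.2⟩
  exact Nat.card_of_isEmpty

/-- head pattern: below `j`, word equals parity pattern `ε` -/
def HeadW (j ε : ℕ) (f : ℕ → Bool) : Prop := ∀ i, 1 ≤ i → i < j → f i = decide (i % 2 = ε)

/-- i is an alternating descent (pattern ε) of a word of length m -/
def AltdW (m ε : ℕ) (f : ℕ → Bool) (i : ℕ) : Prop := 1 ≤ i ∧ i < m ∧ f i = decide (i % 2 = ε)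

/-- the `c`-type tail condition -/
def TailW (m ε : ℕ) (f : ℕ → Bool) : Prop :=
  (∀ i, 1 ≤ i → i + 2 ≤ m → (AltdW m ε f i ∨ AltdW m ε f (i + 1))) ∧ AltdW m ε f (m - 1)

noncomputable def EW (m ε : ℕ) : ℕ := cnt m (fun σ => HeadW m ε (wrd σ))
noncomputable def XW (m ε : ℕ) : ℕ := cnt m (fun σ => TailW m ε (wrd σ))

lemma headW_congr {j ε : ℕ} {f g : ℕ → Bool} (h : ∀ i, 1 ≤ i → i < j → f i = g i) :
    HeadW j ε f ↔ HeadW j ε g :=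
  forall_congr' fun i => imp_congr_right fun h1 => imp_congr_right fun h2 => by
    rw [h i h1 h2]

lemma altdW_congr {m ε : ℕ} {f g : ℕ → Bool} (h : ∀ i, 1 ≤ i → i < m → f i = g i) (i : ℕ) :
    AltdW m ε f i ↔ AltdW m ε g i :=
  and_congr_right fun a => and_congr_right fun b => by rw [h i a b]

lemma tailW_congr {m ε : ℕ} {f g : ℕ → Bool} (h : ∀ i, 1 ≤ i → i < m → f i = g i) :
    TailW m ε f ↔ TailW m ε g :=
  and_congr
    (forall_congr' fun i => imp_congr_right fun h1 => imp_congr_right fun h2 =>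
      or_congr (altdW_congr h i) (altdW_congr h (i+1)))
    (altdW_congr h (m-1))

lemma wrd_eq {n : ℕ} (σ : Equiv.Perm (Fin n)) {i : ℕ} (h1 : 1 ≤ i) (h2 : i < n) :
    wrd σ i = decide ((σ ⟨i - 1, by omega⟩ : ℕ) < (σ ⟨i, h2⟩ : ℕ)) := by
  unfold wrd
  rw [permEnt_eq σ h1 (le_of_lt h2), permEnt_eq σ (by omega) h2]
  have he : (⟨i + 1 - 1, by omega⟩ : Fin n) = ⟨i, h2⟩ := by
    apply Fin.val_injective; simp
  rw [he]
  simp only [decide_eq_decide]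
  omega

lemma nat_rev_lt (n a b : ℕ) (ha : a < n) (hb : b < n) (hne : a ≠ b) :
    decide (n - (a + 1) < n - (b + 1)) = ! decide (a < b) := by
  by_cases h : a < b
  · rw [decide_eq_true h, decide_eq_false (by omega)]; rfl
  · rw [decide_eq_false h, decide_eq_true (by omega)]; rfl

lemma rev_decide_lt {n : ℕ} (x y : Fin n) (hne : (x : ℕ) ≠ (y : ℕ)) :
    (decide (((Fin.rev x) : ℕ) < ((Fin.rev y) : ℕ))) = ! decide ((x : ℕ) < (y : ℕ)) := by
  simp only [Fin.val_rev]
  exact nat_rev_lt n x y x.isLt y.isLt hne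

lemma wrd_rev {n : ℕ} (σ : Equiv.Perm (Fin n)) {i : ℕ} (h1 : 1 ≤ i) (h2 : i < n) :
    wrd (σ.trans Fin.revPerm) i = ! (wrd σ i) := by
  rw [wrd_eq σ h1 h2, wrd_eq (σ.trans Fin.revPerm) h1 h2]
  have hne : ((σ ⟨i - 1, by omega⟩ : Fin n) : ℕ) ≠ ((σ ⟨i, h2⟩ : Fin n) : ℕ) := by
    intro h
    have h' := σ.injective (Fin.val_injective h)
    have := congrArg Fin.val h'
    simp at this; omega
  simp only [Equiv.trans_apply, Fin.revPerm_apply]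
  exact rev_decide_lt _ _ hne

/-- flipping all letters of the word is a bijection on permutations -/
lemma cnt_flip (m : ℕ) (Q : (ℕ → Bool) → Prop)
    (hQ : ∀ f g, (∀ i, 1 ≤ i → i < m → f i = g i) → (Q f ↔ Q g)) :
    cnt m (fun σ => Q (wrd σ)) = cnt m (fun σ => Q (fun i => ! (wrd σ i))) := by
  unfold cnt
  apply Nat.card_congr
  refine Equiv.subtypeEquiv (Equiv.mulLeft Fin.revPerm) (fun σ => ?_)
  apply hQ
  intro i h1 h2
  have he : (Equiv.mulLeft Fin.revPerm σ) = σ.trans Fin.revPerm := rfl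
  rw [he, wrd_rev σ h1 h2, Bool.not_not]

lemma flip_decide {b : Bool} {p q : Prop} [Decidable p] [Decidable q] (hpq : ¬ p ↔ q) :
    ((!b) = decide p) ↔ (b = decide q) := by
  cases b <;> by_cases hp : p <;> simp_all

lemma headW_flip (j ε : ℕ) (hε : ε < 2) (f : ℕ → Bool) :
    HeadW j ε (fun i => ! f i) ↔ HeadW j (1 - ε) f := by
  unfold HeadW
  refine forall_congr' fun i => imp_congr_right fun _ => imp_congr_right fun _ => ?_
  show ((! f i) = _) ↔ _
  exact flip_decide (by omega)

lemma altdW_flip (m ε : ℕ) (hε : ε < 2) (f : ℕ → Bool) (i : ℕ) :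
    AltdW m ε (fun i => ! f i) i ↔ AltdW m (1 - ε) f i := by
  unfold AltdW
  refine and_congr_right fun _ => and_congr_right fun _ => ?_
  show ((! f i) = _) ↔ _
  exact flip_decide (by omega)

lemma tailW_flip (m ε : ℕ) (hε : ε < 2) (f : ℕ → Bool) :
    TailW m ε (fun i => ! f i) ↔ TailW m (1 - ε) f := by
  unfold TailW
  exact and_congr
    (forall_congr' fun i => imp_congr_right fun _ => imp_congr_right fun _ =>
      or_congr (altdW_flip m ε hε f i) (altdW_flip m ε hε f (i+1)))
    (altdW_flip m ε hε f (m-1))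

lemma EW_flip (m : ℕ) : EW m 1 = EW m 0 := by
  unfold EW
  rw [cnt_flip m (HeadW m 1) (fun f g h => headW_congr h)]
  exact cnt_congr fun σ => headW_flip m 1 (by norm_num) (wrd σ)

lemma XW_flip (m : ℕ) : XW m 1 = XW m 0 := by
  unfold XW
  rw [cnt_flip m (TailW m 1) (fun f g h => tailW_congr h)]
  exact cnt_congr fun σ => tailW_flip m 1 (by norm_num) (wrd σ)

end Aux2

section Step

open Equiv Finset

set_option maxHeartbeats 1000000

variable {j m : ℕ}

lemma card_compl' {A : Finset (Fin (j + m))} (hA : A.card = j) : Aᶜ.card = m := by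
  rw [Finset.card_compl, hA]
  simp

/-- value-side equivalence: first `j` slots go to `A` in order, rest to `Aᶜ` in order -/
noncomputable def valE (A : Finset (Fin (j + m))) (hA : A.card = j) :
    Fin j ⊕ Fin m ≃ Fin (j + m) :=
  (Equiv.sumCongr (A.orderIsoOfFin hA).toEquiv ((Aᶜ.orderIsoOfFin (card_compl' hA)).toEquiv)).trans
    ((Equiv.sumCongr (Equiv.refl _) (Equiv.subtypeEquivRight (fun x => Finset.mem_compl))).trans
      (Equiv.sumCompl (· ∈ A)))

/-- the assembled permutation -/
noncomputable def psi (A : Finset (Fin (j + m))) (hA : A.card = j)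
    (u : Equiv.Perm (Fin j)) (v : Equiv.Perm (Fin m)) : Equiv.Perm (Fin (j + m)) :=
  finSumFinEquiv.symm.trans ((Equiv.sumCongr u v).trans (valE A hA))

lemma psi_apply_lt (A : Finset (Fin (j + m))) (hA : A.card = j)
    (u : Equiv.Perm (Fin j)) (v : Equiv.Perm (Fin m)) (x : Fin (j + m)) (hx : (x : ℕ) < j) :
    psi A hA u v x = ((A.orderIsoOfFin hA) (u ⟨(x : ℕ), hx⟩) : Fin (j + m)) := by
  have hx' : x = Fin.castAdd m ⟨(x : ℕ), hx⟩ := by apply Fin.val_injective; rfl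
  show (finSumFinEquiv.symm.trans ((Equiv.sumCongr u v).trans (valE A hA))) x = _
  simp only [Equiv.trans_apply]
  conv_lhs => rw [hx', finSumFinEquiv_symm_apply_castAdd]
  rfl

lemma psi_apply_ge (A : Finset (Fin (j + m))) (hA : A.card = j)
    (u : Equiv.Perm (Fin j)) (v : Equiv.Perm (Fin m)) (x : Fin (j + m)) (hx : j ≤ (x : ℕ)) :
    psi A hA u v x = ((Aᶜ.orderIsoOfFin (card_compl' hA)) (v ⟨(x : ℕ) - j, by omega⟩) : Fin (j + m)) := by
  have hx' : x = Fin.natAdd j ⟨(x : ℕ) - j, by have := x.isLt; omega⟩ := by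
    apply Fin.val_injective; simp; omega
  show (finSumFinEquiv.symm.trans ((Equiv.sumCongr u v).trans (valE A hA))) x = _
  simp only [Equiv.trans_apply]
  conv_lhs => rw [hx', finSumFinEquiv_symm_apply_natAdd]
  rfl

attribute [irreducible] psi valE

lemma orderIsoOfFin_coe_lt {n k : ℕ} (A : Finset (Fin n)) (hA : A.card = k) (a b : Fin k) :
    ((((A.orderIsoOfFin hA) a : Fin n)) : ℕ) < (((A.orderIsoOfFin hA) b : Fin n) : ℕ)
      ↔ (a : ℕ) < (b : ℕ) := by
  rw [← Fin.lt_def, Subtype.coe_lt_coe, OrderIso.lt_iff_lt, Fin.lt_def]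

lemma psi_mem_lt (A : Finset (Fin (j + m))) (hA : A.card = j)
    (u : Equiv.Perm (Fin j)) (v : Equiv.Perm (Fin m)) (x : Fin (j + m)) (hx : (x : ℕ) < j) :
    psi A hA u v x ∈ A := by
  rw [psi_apply_lt A hA u v x hx]
  exact ((A.orderIsoOfFin hA) (u ⟨(x : ℕ), hx⟩)).2

lemma psi_notMem_ge (A : Finset (Fin (j + m))) (hA : A.card = j)
    (u : Equiv.Perm (Fin j)) (v : Equiv.Perm (Fin m)) (x : Fin (j + m)) (hx : j ≤ (x : ℕ)) :
    psi A hA u v x ∉ A := by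
  rw [psi_apply_ge A hA u v x hx]
  have := ((Aᶜ.orderIsoOfFin (card_compl' hA)) (v ⟨(x : ℕ) - j, by omega⟩)).2
  rw [Finset.mem_compl] at this
  exact this

lemma wrd_psi_head (A : Finset (Fin (j + m))) (hA : A.card = j)
    (u : Equiv.Perm (Fin j)) (v : Equiv.Perm (Fin m)) (i : ℕ) (h1 : 1 ≤ i) (h2 : i < j) :
    wrd (psi A hA u v) i = wrd u i := by
  rw [wrd_eq _ h1 (by omega : i < j + m), wrd_eq u h1 h2]
  rw [psi_apply_lt A hA u v _ (by simp; omega : ((⟨i - 1, by omega⟩ : Fin (j + m)) : ℕ) < j),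
      psi_apply_lt A hA u v _ (by simp; omega : ((⟨i, by omega⟩ : Fin (j + m)) : ℕ) < j)]
  apply decide_eq_decide.mpr
  rw [orderIsoOfFin_coe_lt A hA]

lemma wrd_psi_tail (A : Finset (Fin (j + m))) (hA : A.card = j)
    (u : Equiv.Perm (Fin j)) (v : Equiv.Perm (Fin m)) (i : ℕ) (h1 : j + 1 ≤ i) (h2 : i < j + m) :
    wrd (psi A hA u v) i = wrd v (i - j) := by
  rw [wrd_eq _ (by omega : 1 ≤ i) h2, wrd_eq v (by omega : 1 ≤ i - j) (by omega : i - j < m)]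
  rw [psi_apply_ge A hA u v _ (by simp; omega : j ≤ ((⟨i - 1, by omega⟩ : Fin (j + m)) : ℕ)),
      psi_apply_ge A hA u v _ (by simp; omega : j ≤ ((⟨i, h2⟩ : Fin (j + m)) : ℕ))]
  have e1 : (⟨((⟨i - 1, by omega⟩ : Fin (j + m)) : ℕ) - j, by simp; omega⟩ : Fin m)
      = ⟨i - j - 1, by omega⟩ := by apply Fin.val_injective; simp; omega
  have e2 : (⟨((⟨i, h2⟩ : Fin (j + m)) : ℕ) - j, by simp; omega⟩ : Fin m)
      = ⟨i - j, by omega⟩ := by apply Fin.val_injective; simp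
  rw [e1, e2]
  apply decide_eq_decide.mpr
  rw [orderIsoOfFin_coe_lt Aᶜ (card_compl' hA)]

lemma psi_mem_iff (A : Finset (Fin (j + m))) (hA : A.card = j)
    (u : Equiv.Perm (Fin j)) (v : Equiv.Perm (Fin m)) (y : Fin (j + m)) :
    y ∈ A ↔ (((psi A hA u v).symm y : Fin (j + m)) : ℕ) < j := by
  constructor
  · intro hmem
    by_contra h
    exact psi_notMem_ge A hA u v ((psi A hA u v).symm y) (by omega)
      (by rw [Equiv.apply_symm_apply]; exact hmem)
  · intro h
    have := psi_mem_lt A hA u v ((psi A hA u v).symm y) h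
    rwa [Equiv.apply_symm_apply] at this

lemma psi_inj2 (A A' : Finset (Fin (j + m))) (hA : A.card = j) (hA' : A'.card = j)
    (u u' : Equiv.Perm (Fin j)) (v v' : Equiv.Perm (Fin m))
    (hEq : psi A hA u v = psi A' hA' u' v') : A = A' := by
  ext y
  rw [psi_mem_iff A hA u v y, psi_mem_iff A' hA' u' v' y, hEq]

lemma psi_inj3 (A : Finset (Fin (j + m))) (hA : A.card = j)
    (u u' : Equiv.Perm (Fin j)) (v v' : Equiv.Perm (Fin m))
    (hEq : psi A hA u v = psi A hA u' v') : u = u' := by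
  ext p
  have hp : ((⟨(p : ℕ), by omega⟩ : Fin (j + m)) : ℕ) < j := p.isLt
  have h1 := psi_apply_lt A hA u v ⟨(p : ℕ), by omega⟩ hp
  have h2 := psi_apply_lt A hA u' v' ⟨(p : ℕ), by omega⟩ hp
  rw [hEq] at h1
  rw [h1] at h2
  have h3 := Subtype.coe_injective h2
  have h4 := (A.orderIsoOfFin hA).injective h3
  have h5 : (⟨((⟨(p : ℕ), by omega⟩ : Fin (j + m)) : ℕ), hp⟩ : Fin j) = p := by
    apply Fin.val_injective; rfl
  rw [h5] at h4
  exact congrArg Fin.val h4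

lemma psi_inj4 (A : Finset (Fin (j + m))) (hA : A.card = j)
    (u u' : Equiv.Perm (Fin j)) (v v' : Equiv.Perm (Fin m))
    (hEq : psi A hA u v = psi A hA u' v') : v = v' := by
  ext p
  have hxlt : j + (p : ℕ) < j + m := by omega
  have hple : j ≤ ((⟨j + (p : ℕ), hxlt⟩ : Fin (j + m)) : ℕ) := by simp
  have h1 := psi_apply_ge A hA u v ⟨j + (p : ℕ), hxlt⟩ hple
  have h2 := psi_apply_ge A hA u' v' ⟨j + (p : ℕ), hxlt⟩ hple
  rw [hEq] at h1
  rw [h1] at h2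
  have h3 := Subtype.coe_injective h2
  have h4 := (Aᶜ.orderIsoOfFin (card_compl' hA)).injective h3
  have h5 : (⟨((⟨j + (p : ℕ), hxlt⟩ : Fin (j + m)) : ℕ) - j, by omega⟩ : Fin m) = p := by
    apply Fin.val_injective; simp
  rw [h5] at h4
  exact congrArg Fin.val h4

lemma psi_inj :
    Function.Injective (fun t : ({A : Finset (Fin (j + m)) // A.card = j} ×
        (Equiv.Perm (Fin j) × Equiv.Perm (Fin m))) => psi t.1.1 t.1.2 t.2.1 t.2.2) := by
  rintro ⟨⟨A, hA⟩, ⟨u, v⟩⟩ ⟨⟨A', hA'⟩, ⟨u', v'⟩⟩ hEq0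
  have hEq : psi A hA u v = psi A' hA' u' v' := hEq0
  obtain rfl : A = A' := psi_inj2 A A' hA hA' u u' v v' hEq
  have hEq' : psi A hA u v = psi A hA u' v' := hEq
  obtain rfl : u = u' := psi_inj3 A hA u u' v v' hEq'
  obtain rfl : v = v' := psi_inj4 A hA u u v v' hEq'
  rfl

theorem step (P Q : (ℕ → Bool) → Prop)
    (hP : ∀ f g, (∀ i, 1 ≤ i → i < j → f i = g i) → (P f ↔ P g))
    (hQ : ∀ f g, (∀ i, j + 1 ≤ i → i < j + m → f i = g i) → (Q f ↔ Q g)) :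
    cnt (j + m) (fun σ => P (wrd σ) ∧ Q (wrd σ))
      = (j + m).choose j * (cnt j (fun u => P (wrd u))
          * cnt m (fun v => Q (fun i => wrd v (i - j)))) := by
  classical
  have hbij : Function.Bijective (fun t : ({A : Finset (Fin (j + m)) // A.card = j} ×
      (Equiv.Perm (Fin j) × Equiv.Perm (Fin m))) => psi t.1.1 t.1.2 t.2.1 t.2.2) := by
    rw [Fintype.bijective_iff_injective_and_card]
    refine ⟨psi_inj, ?_⟩
    rw [Fintype.card_prod, Fintype.card_prod, Fintype.card_perm, Fintype.card_perm,
      Fintype.card_perm, Fintype.card_finset_len, Fintype.card_fin, Fintype.card_fin,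
      Fintype.card_fin]
    rw [← Nat.choose_mul_factorial_mul_factorial (Nat.le_add_right j m)]
    rw [Nat.add_sub_cancel_left]
    ring
  set E := Equiv.ofBijective _ hbij with hE
  have key : ∀ t : ({A : Finset (Fin (j + m)) // A.card = j} ×
      (Equiv.Perm (Fin j) × Equiv.Perm (Fin m))),
      (P (wrd t.2.1) ∧ Q (fun i => wrd t.2.2 (i - j))) ↔ (P (wrd (E t)) ∧ Q (wrd (E t))) := by
    rintro ⟨⟨A, hA⟩, ⟨u, v⟩⟩
    have hEt : E (⟨⟨A, hA⟩, ⟨u, v⟩⟩) = psi A hA u v := rfl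
    rw [hEt]
    exact and_congr
      (hP _ _ (fun i h1 h2 => (wrd_psi_head A hA u v i h1 h2).symm))
      (hQ _ _ (fun i h1 h2 => (wrd_psi_tail A hA u v i h1 h2).symm))
  unfold cnt
  rw [← Nat.card_congr (Equiv.subtypeEquiv E key)]
  have e3 : {t : ({A : Finset (Fin (j + m)) // A.card = j} ×
      (Equiv.Perm (Fin j) × Equiv.Perm (Fin m))) //
        P (wrd t.2.1) ∧ Q (fun i => wrd t.2.2 (i - j))} ≃
      {A : Finset (Fin (j + m)) // A.card = j} ×
        ({u : Equiv.Perm (Fin j) // P (wrd u)} ×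
          {v : Equiv.Perm (Fin m) // Q (fun i => wrd v (i - j))}) :=
    { toFun := fun t => ⟨t.1.1, ⟨⟨t.1.2.1, t.2.1⟩, ⟨t.1.2.2, t.2.2⟩⟩⟩,
      invFun := fun t => ⟨⟨t.1, (t.2.1.1, t.2.2.1)⟩, ⟨t.2.1.2, t.2.2.2⟩⟩,
      left_inv := fun t => rfl,
      right_inv := fun t => rfl }
  rw [Nat.card_congr e3, Nat.card_prod, Nat.card_prod]
  congr 1
  rw [Nat.card_eq_fintype_card, Fintype.card_finset_len, Fintype.card_fin]

end Step

section Aux4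

open Equiv Finset

/-- no alternating descent strictly below `j` -/
def PrefB (n j : ℕ) (σ : Equiv.Perm (Fin n)) : Prop :=
  ∀ i, 1 ≤ i → i < j → ¬ IsAltDescent σ i

/-- pairs condition from `a` on -/
def PairsF (n a : ℕ) (σ : Equiv.Perm (Fin n)) : Prop :=
  ∀ i, a ≤ i → i + 2 ≤ n → (IsAltDescent σ i ∨ IsAltDescent σ (i + 1))

def LastD (n : ℕ) (σ : Equiv.Perm (Fin n)) : Prop := IsAltDescent σ (n - 1)

noncomputable def Bc (n k : ℕ) : ℕ :=
  cnt n (fun σ => PrefB n (k + 1) σ ∧ (PairsF n (k + 1) σ ∧ LastD n σ))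
noncomputable def Ac (n j : ℕ) : ℕ :=
  cnt n (fun σ => PrefB n j σ ∧ (PairsF n (j + 1) σ ∧ LastD n σ))
noncomputable def Cc (n t : ℕ) : ℕ :=
  cnt n (fun σ => PrefB n (t + 1) σ ∧ (PairsF n t σ ∧ LastD n σ))

lemma pairsF_cons {n a : ℕ} {σ : Equiv.Perm (Fin n)} :
    PairsF n a σ ↔ ((a + 2 ≤ n → (IsAltDescent σ a ∨ IsAltDescent σ (a + 1)))
      ∧ PairsF n (a + 1) σ) := by
  unfold PairsF
  constructor
  · intro h; exact ⟨fun hh => h a le_rfl hh, fun i hi h2 => h i (by omega) h2⟩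
  · rintro ⟨h1, h2⟩ i hi h2'
    rcases eq_or_lt_of_le hi with rfl | hlt
    · exact h1 h2'
    · exact h2 i (by omega) h2'

lemma pairsF_mono {n a b : ℕ} {σ : Equiv.Perm (Fin n)} (hab : a ≤ b) :
    PairsF n a σ → PairsF n b σ := fun h i hi h2 => h i (by omega) h2

lemma prefB_succ {n t : ℕ} {σ : Equiv.Perm (Fin n)} (ht : 1 ≤ t) :
    PrefB n (t + 1) σ ↔ (PrefB n t σ ∧ ¬ IsAltDescent σ t) := by
  unfold PrefB
  constructor
  · intro h; exact ⟨fun i h1 h2 => h i h1 (by omega), h t ht (by omega)⟩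
  · rintro ⟨h1, h2⟩ i hi h2'
    rcases Nat.lt_or_ge i t with hlt | hge
    · exact h1 i hi hlt
    · have : i = t := by omega
      subst this; exact h2

lemma bool_ne_decide_mod2 (b : Bool) (i : ℕ) :
    (¬ b = decide (i % 2 = 0)) ↔ b = decide (i % 2 = 1) := by
  rcases Nat.mod_two_eq_zero_or_one i with h | h <;> cases b <;> simp [h]

lemma prefB_iff_headW {n j : ℕ} (hj : j ≤ n) (σ : Equiv.Perm (Fin n)) :
    PrefB n j σ ↔ HeadW j 1 (wrd σ) := by
  unfold PrefB HeadW
  refine forall_congr' fun i => imp_congr_right fun h1 => imp_congr_right fun h2 => ?_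
  rw [isAltDescent_iff_wrd]
  rw [← bool_ne_decide_mod2]
  constructor
  · intro h hh; exact h ⟨h1, by omega, hh⟩
  · intro h hh; exact h hh.2.2

lemma eulerNum_eq_EW (n : ℕ) : eulerNum n = EW n 0 := by
  unfold eulerNum EW cnt
  apply Nat.card_congr
  refine Equiv.subtypeEquiv (Equiv.refl _) (fun σ => ?_)
  rw [isAltPerm_iff_wrd]
  rfl

lemma cCount_cnt (n : ℕ) : cCount n = cnt n (fun σ =>
    (∀ i, 1 ≤ i → i ≤ n - 2 → (IsAltDescent σ i ∨ IsAltDescent σ (i + 1))) ∧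
    (n = 1 ∨ IsAltDescent σ (n - 1))) := rfl

lemma cCount_eq_XW {n : ℕ} (hn : 2 ≤ n) : cCount n = XW n 0 := by
  rw [cCount_cnt]
  unfold XW
  apply cnt_congr
  intro σ
  unfold TailW
  constructor
  · rintro ⟨h1, h2⟩
    constructor
    · intro i hi1 hi2
      rcases h1 i hi1 (by omega) with h | h
      · exact Or.inl ((isAltDescent_iff_wrd σ i).mp h)
      · exact Or.inr ((isAltDescent_iff_wrd σ (i+1)).mp h)
    · rcases h2 with h | h
      · omega
      · exact (isAltDescent_iff_wrd σ (n-1)).mp h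
  · rintro ⟨h1, h2⟩
    constructor
    · intro i hi1 hi2
      rcases h1 i hi1 (by omega) with h | h
      · exact Or.inl ((isAltDescent_iff_wrd σ i).mpr h)
      · exact Or.inr ((isAltDescent_iff_wrd σ (i+1)).mpr h)
    · exact Or.inr ((isAltDescent_iff_wrd σ (n-1)).mpr h2)

lemma cCount_zero : cCount 0 = 0 := by
  rw [cCount_cnt]
  apply cnt_false
  rintro σ ⟨-, h | h⟩
  · omega
  · exact absurd h.1 (by omega)

lemma cCount_one : cCount 1 = 1 := by
  rw [cCount_cnt]
  have : cnt 1 (fun σ : Equiv.Perm (Fin 1) =>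
      (∀ i, 1 ≤ i → i ≤ 1 - 2 → (IsAltDescent σ i ∨ IsAltDescent σ (i + 1))) ∧
      (1 = 1 ∨ IsAltDescent σ (1 - 1))) = cnt 1 (fun _ => True) := by
    apply cnt_congr
    intro σ
    exact iff_of_true ⟨fun i h1 h2 => by omega, Or.inl rfl⟩ trivial
  rw [this, cnt_true]
  rfl

lemma eulerNum_zero : eulerNum 0 = 1 := by
  rw [eulerNum_eq_EW]
  unfold EW
  rw [show (cnt 0 (fun σ => HeadW 0 0 (wrd σ))) = cnt 0 (fun _ => True) from
    cnt_congr (fun σ => by unfold HeadW; constructor <;> intro <;> first | trivial | omega)]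
  rw [cnt_true]; rfl

lemma eulerNum_one : eulerNum 1 = 1 := by
  rw [eulerNum_eq_EW]
  unfold EW
  rw [show (cnt 1 (fun σ => HeadW 1 0 (wrd σ))) = cnt 1 (fun _ => True) from
    cnt_congr (fun σ => by
      unfold HeadW
      constructor
      · intro _; trivial
      · intro _ i h1 h2; omega)]
  rw [cnt_true]; rfl

/-- main evaluation of the `A` counts via the splitting lemma -/
lemma Ac_eval (j m : ℕ) (hm : 2 ≤ m) :
    Ac (j + m) j = (j + m).choose j * (eulerNum j * cCount m) := by
  unfold Ac
  have hstep := step (j := j) (m := m) (HeadW j 1)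
    (fun f => (∀ i, j + 1 ≤ i → i + 2 ≤ j + m →
        (AltdW (j + m) 0 f i ∨ AltdW (j + m) 0 f (i + 1))) ∧ AltdW (j + m) 0 f (j + m - 1))
    (fun f g h => headW_congr h)
    (fun f g h => by
      have ha : ∀ i, j + 1 ≤ i → (AltdW (j + m) 0 f i ↔ AltdW (j + m) 0 g i) := by
        intro i hi
        exact and_congr_right fun _ => and_congr_right fun hb => by rw [h i hi hb]
      exact and_congr
        (forall_congr' fun i => imp_congr_right fun h1 => imp_congr_right fun h2 =>
          or_congr (ha i h1) (ha (i+1) (by omega)))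
        (ha (j + m - 1) (by omega)))
  rw [show (cnt (j + m) fun σ => PrefB (j+m) j σ ∧ (PairsF (j+m) (j+1) σ ∧ LastD (j+m) σ))
      = cnt (j + m) (fun σ => HeadW j 1 (wrd σ) ∧
        ((∀ i, j + 1 ≤ i → i + 2 ≤ j + m →
          (AltdW (j + m) 0 (wrd σ) i ∨ AltdW (j + m) 0 (wrd σ) (i + 1)))
          ∧ AltdW (j + m) 0 (wrd σ) (j + m - 1))) from
    cnt_congr (fun σ => by
      apply and_congr (prefB_iff_headW (by omega) σ)
      apply and_congr
      · unfold PairsF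
        exact forall_congr' fun i => imp_congr_right fun h1 => imp_congr_right fun h2 =>
          or_congr (isAltDescent_iff_wrd σ i) (isAltDescent_iff_wrd σ (i+1))
      · exact isAltDescent_iff_wrd σ (j + m - 1))]
  rw [hstep]
  congr 1
  have hhead : cnt j (fun u => HeadW j 1 (wrd u)) = eulerNum j := by
    show EW j 1 = eulerNum j
    rw [EW_flip, eulerNum_eq_EW]
  have htail : cnt m (fun v =>
      (∀ i, j + 1 ≤ i → i + 2 ≤ j + m →
        (AltdW (j + m) 0 (fun i => wrd v (i - j)) i ∨
          AltdW (j + m) 0 (fun i => wrd v (i - j)) (i + 1)))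
        ∧ AltdW (j + m) 0 (fun i => wrd v (i - j)) (j + m - 1)) = cCount m := by
    have hsh : ∀ (v : Equiv.Perm (Fin m)) (i : ℕ), j + 1 ≤ i →
        (AltdW (j + m) 0 (fun i => wrd v (i - j)) i ↔ AltdW m (j % 2) (wrd v) (i - j)) := by
      intro v i hi
      unfold AltdW
      constructor
      · rintro ⟨a, b, c⟩
        refine ⟨by omega, by omega, ?_⟩
        have c' : wrd v (i - j) = decide (i % 2 = 0) := c
        rw [c']
        exact decide_eq_decide.mpr (by omega)
      · rintro ⟨a, b, c⟩
        refine ⟨by omega, by omega, ?_⟩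
        show wrd v (i - j) = decide (i % 2 = 0)
        rw [c]
        exact decide_eq_decide.mpr (by omega)
    have : ∀ v : Equiv.Perm (Fin m),
        ((∀ i, j + 1 ≤ i → i + 2 ≤ j + m →
          (AltdW (j + m) 0 (fun i => wrd v (i - j)) i ∨
            AltdW (j + m) 0 (fun i => wrd v (i - j)) (i + 1)))
          ∧ AltdW (j + m) 0 (fun i => wrd v (i - j)) (j + m - 1)) ↔ TailW m (j % 2) (wrd v) := by
      intro v
      unfold TailW
      constructor
      · rintro ⟨h1, h2⟩
        constructor
        · intro t ht1 ht2
          rcases h1 (t + j) (by omega) (by omega) with h | h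
          · left
            have := (hsh v (t + j) (by omega)).mp h
            rwa [show t + j - j = t by omega] at this
          · right
            have := (hsh v (t + j + 1) (by omega)).mp h
            rwa [show t + j + 1 - j = t + 1 by omega] at this
        · have := (hsh v (j + m - 1) (by omega)).mp h2
          rwa [show j + m - 1 - j = m - 1 by omega] at this
      · rintro ⟨h1, h2⟩
        constructor
        · intro i hi1 hi2
          rcases h1 (i - j) (by omega) (by omega) with h | h
          · left
            exact (hsh v i (by omega)).mpr h
          · right
            have := (hsh v (i + 1) (by omega)).mpr
            apply this
            rwa [show i + 1 - j = i - j + 1 by omega]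
        · apply (hsh v (j + m - 1) (by omega)).mpr
          rwa [show j + m - 1 - j = m - 1 by omega]
    rw [cnt_congr this]
    show XW m (j % 2) = cCount m
    rcases Nat.mod_two_eq_zero_or_one j with h | h <;> rw [h]
    · exact (cCount_eq_XW hm).symm
    · rw [XW_flip]
      exact (cCount_eq_XW hm).symm
  rw [hhead, htail]

end Aux4

section Aux5

open Equiv Finset

lemma Bc_top (k : ℕ) (hk : 1 ≤ k) : Bc (k + 1) k = 0 := by
  unfold Bc
  apply cnt_false
  rintro σ ⟨hp, -, hl⟩
  exact hp k hk (by omega) hl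

lemma cnt_prefB_full (n : ℕ) : cnt n (fun σ => PrefB n n σ) = eulerNum n := by
  rw [cnt_congr (fun σ => prefB_iff_headW le_rfl σ)]
  show EW n 1 = eulerNum n
  rw [EW_flip, eulerNum_eq_EW]

lemma cnt_prefB_front (t : ℕ) : cnt (t + 1) (fun σ => PrefB (t + 1) t σ) = (t + 1) * eulerNum t := by
  have hstep := step (j := t) (m := 1) (HeadW t 1) (fun _ => True)
    (fun f g h => headW_congr h) (fun f g h => Iff.rfl)
  rw [cnt_congr (fun σ => show PrefB (t+1) t σ ↔ HeadW t 1 (wrd σ) ∧ True from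
    (and_iff_left trivial).symm.trans (and_congr_left' (prefB_iff_headW (by omega) σ)))]
  rw [hstep, cnt_true, Nat.choose_succ_self_right]
  have : cnt t (fun u => HeadW t 1 (wrd u)) = eulerNum t := by
    show EW t 1 = eulerNum t
    rw [EW_flip, eulerNum_eq_EW]
  rw [this]
  simp [Nat.factorial]

lemma Bc_n2 (t : ℕ) : Bc (t + 2) t + eulerNum (t + 2) = (t + 2) * eulerNum (t + 1) := by
  have h := cnt_split (n := t + 2) (fun σ => PrefB (t + 2) (t + 1) σ) (fun σ => LastD (t + 2) σ)
  have e1 : cnt (t + 2) (fun σ => PrefB (t + 2) (t + 1) σ ∧ LastD (t + 2) σ) = Bc (t + 2) t := by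
    unfold Bc
    apply cnt_congr
    intro σ
    constructor
    · rintro ⟨hp, hl⟩
      exact ⟨hp, fun i h1 h2 => by omega, hl⟩
    · rintro ⟨hp, -, hl⟩
      exact ⟨hp, hl⟩
  have e2 : cnt (t + 2) (fun σ => PrefB (t + 2) (t + 1) σ ∧ ¬ LastD (t + 2) σ)
      = eulerNum (t + 2) := by
    rw [← cnt_prefB_full (t + 2)]
    apply cnt_congr
    intro σ
    constructor
    · rintro ⟨hp, hl⟩
      exact (prefB_succ (by omega)).mpr ⟨hp, hl⟩
    · intro hp
      exact (prefB_succ (by omega)).mp hp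
  rw [e1, e2] at h
  rw [← h]
  exact (cnt_prefB_front (t + 1)).symm ▸ rfl

lemma Bc_n3 (t : ℕ) : Bc (t + 3) t = Ac (t + 3) (t + 1) := by
  unfold Bc Ac
  apply cnt_congr
  intro σ
  refine and_congr_right fun hp => and_congr_left fun hl => ?_
  constructor
  · exact pairsF_mono (by omega)
  · intro hq
    exact pairsF_cons.mpr ⟨fun _ => Or.inr hl, hq⟩

lemma Ac_top (t : ℕ) : Ac (t + 2) (t + 1) = Bc (t + 2) t := by
  unfold Ac Bc
  apply cnt_congr
  intro σ
  refine and_congr_right fun hp => and_congr_left fun hl => ?_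
  constructor
  · intro _ i h1 h2; omega
  · intro _ i h1 h2; omega

lemma eqE1 (n k : ℕ) (h : k + 3 ≤ n) : Ac n (k + 1) = Bc n k + Cc n (k + 2) := by
  unfold Ac Bc Cc
  rw [cnt_split _ (fun σ => IsAltDescent σ (k + 1) ∨ IsAltDescent σ (k + 2))]
  congr 1
  · apply cnt_congr
    intro σ
    constructor
    · rintro ⟨⟨hp, hq, hl⟩, hd⟩
      exact ⟨hp, pairsF_cons.mpr ⟨fun _ => hd, hq⟩, hl⟩
    · rintro ⟨hp, hq, hl⟩
      have h2 := pairsF_cons.mp hq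
      exact ⟨⟨hp, h2.2, hl⟩, h2.1 (by omega)⟩
  · apply cnt_congr
    intro σ
    constructor
    · rintro ⟨⟨hp, hq, hl⟩, hd⟩
      push_neg at hd
      refine ⟨?_, hq, hl⟩
      rw [prefB_succ (by omega), prefB_succ (by omega)]
      exact ⟨⟨hp, hd.1⟩, hd.2⟩
    · rintro ⟨hp, hq, hl⟩
      rw [prefB_succ (by omega), prefB_succ (by omega)] at hp
      exact ⟨⟨hp.1.1, hq, hl⟩, by tauto⟩

lemma eqE2 (n k : ℕ) (h : k + 4 ≤ n) : Ac n (k + 3) = Cc n (k + 2) + Bc n (k + 3) := by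
  unfold Ac Bc Cc
  rw [cnt_split _ (fun σ => IsAltDescent σ (k + 3))]
  congr 1
  · apply cnt_congr
    intro σ
    constructor
    · rintro ⟨⟨hp, hq, hl⟩, hd⟩
      refine ⟨hp, ?_, hl⟩
      exact pairsF_cons.mpr ⟨fun _ => Or.inr hd, pairsF_cons.mpr ⟨fun _ => Or.inl hd, hq⟩⟩
    · rintro ⟨hp, hq, hl⟩
      refine ⟨⟨hp, pairsF_mono (by omega) hq, hl⟩, ?_⟩
      have h2 := (pairsF_cons.mp hq).1 (by omega)
      rcases h2 with h2 | h2
      · exact absurd h2 (hp (k + 2) (by omega) (by omega))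
      · exact h2
  · apply cnt_congr
    intro σ
    constructor
    · rintro ⟨⟨hp, hq, hl⟩, hd⟩
      exact ⟨(prefB_succ (by omega)).mpr ⟨hp, hd⟩, hq, hl⟩
    · rintro ⟨hp, hq, hl⟩
      rw [prefB_succ (by omega)] at hp
      exact ⟨⟨hp.1, hq, hl⟩, hp.2⟩

end Aux5

section Aux6

open Equiv Finset

noncomputable def Aq (n d : ℕ) : ℚ := (n.choose d : ℚ) * (eulerNum d : ℚ) * (cCount (n - d) : ℚ)

def pc (r : ℕ) : ℚ := if r % 3 = 1 then 1 else if r % 3 = 0 then -1 else 0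

def tc (r : ℕ) : ℚ := if r % 3 = 2 then -1 else if r % 3 = 1 ∧ r ≠ 1 then 1 else 0

lemma pc_shift (x : ℕ) : pc (x + 3) = pc x := by
  unfold pc
  rw [show (x + 3) % 3 = x % 3 by omega]

lemma tc_shift {x : ℕ} (hx : 2 ≤ x) : tc (x + 3) = tc x := by
  unfold tc
  have h3 : (x + 3) % 3 = x % 3 := by omega
  have hx1 : x ≠ 1 := by omega
  have hx2 : x + 3 ≠ 1 := by omega
  rw [h3]
  rcases (by omega : x % 3 = 0 ∨ x % 3 = 1 ∨ x % 3 = 2) with h | h | h <;>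
    simp [h, hx1, hx2]

lemma pc_one : pc 1 = 1 := rfl
lemma pc_two : pc 2 = 0 := rfl
lemma pc_three : pc 3 = -1 := rfl
lemma tc_one : tc 1 = 0 := rfl
lemma tc_two : tc 2 = -1 := rfl
lemma tc_three : tc 3 = 0 := rfl
lemma tc_four : tc 4 = 1 := rfl

lemma Ac_eval' (n j : ℕ) (h : j + 2 ≤ n) : (Ac n j : ℚ) = Aq n j := by
  obtain ⟨m, rfl⟩ : ∃ m, n = j + m := ⟨n - j, by omega⟩
  rw [Ac_eval j m (by omega)]
  unfold Aq
  push_cast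
  rw [show j + m - j = m by omega]
  ring

lemma Bc_n2' (t : ℕ) : (Bc (t + 2) t : ℚ)
    = (t + 2 : ℚ) * (eulerNum (t + 1) : ℚ) - (eulerNum (t + 2) : ℚ) := by
  have := congrArg (Nat.cast : ℕ → ℚ) (Bc_n2 t)
  push_cast at this
  linarith

lemma chain (n : ℕ) (hn : 2 ≤ n) : ∀ r k, k + r + 1 = n →
    (Bc n k : ℚ) = (∑ d ∈ Finset.Icc (k + 1) (n - 1), pc (d - k) * Aq n d)
      + tc (n - k) * (eulerNum n : ℚ) := by
  intro r
  induction r using Nat.strong_induction_on with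
  | _ r IH =>
    rcases r with _ | _ | _ | s
    · -- r = 0 : k = n - 1
      intro k hk
      obtain rfl : n = k + 1 := by omega
      rw [Bc_top k (by omega)]
      rw [show Finset.Icc (k + 1) (k + 1 - 1) = ∅ from Finset.Icc_eq_empty (by omega)]
      rw [show k + 1 - k = 1 by omega, tc_one]
      simp
    · -- r = 1 : k = n - 2
      intro k hk
      obtain rfl : n = k + 2 := by omega
      rw [Bc_n2' k]
      rw [show k + 2 - 1 = k + 1 by omega, Finset.Icc_self, Finset.sum_singleton]
      rw [show k + 1 - k = 1 by omega, pc_one, show k + 2 - k = 2 by omega, tc_two]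
      unfold Aq
      rw [show k + 2 - (k + 1) = 1 by omega, cCount_one, Nat.choose_succ_self_right]
      push_cast
      ring
    · -- r = 2 : k = n - 3
      intro k hk
      obtain rfl : n = k + 3 := by omega
      have h1 : (Bc (k + 3) k : ℚ) = Aq (k + 3) (k + 1) := by
        rw [Bc_n3 k]
        exact Ac_eval' (k + 3) (k + 1) (by omega)
      rw [h1]
      rw [show k + 3 - 1 = k + 2 by omega]
      rw [show Finset.Icc (k + 1) (k + 2) = insert (k + 1) {k + 2} from by
        ext x; simp [Finset.mem_Icc]; omega]
      rw [Finset.sum_insert (by simp only [Finset.mem_insert, Finset.mem_singleton, Finset.mem_Icc]; omega), Finset.sum_singleton]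
      rw [show k + 1 - k = 1 by omega, pc_one, show k + 2 - k = 2 by omega, pc_two,
        show k + 3 - k = 3 by omega, tc_three]
      ring
    · -- r = s + 3
      intro k hk
      have hE1 : (Ac n (k + 1) : ℚ) = (Bc n k : ℚ) + (Cc n (k + 2) : ℚ) := by
        have := congrArg (Nat.cast : ℕ → ℚ) (eqE1 n k (by omega))
        push_cast at this
        exact this
      have hE2 : (Ac n (k + 3) : ℚ) = (Cc n (k + 2) : ℚ) + (Bc n (k + 3) : ℚ) := by
        have := congrArg (Nat.cast : ℕ → ℚ) (eqE2 n k (by omega))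
        push_cast at this
        exact this
      have hA1 : (Ac n (k + 1) : ℚ) = Aq n (k + 1) := Ac_eval' n (k + 1) (by omega)
      rcases Nat.eq_zero_or_pos s with rfl | hs
      · -- r = 3 : n = k + 4
        obtain rfl : n = k + 4 := by omega
        have hBtop : (Bc (k + 4) (k + 3) : ℚ) = 0 := by
          rw [show Bc (k + 4) (k + 3) = Bc ((k + 3) + 1) (k + 3) from rfl]
          rw [Bc_top (k + 3) (by omega)]
          simp
        have hA3 : (Ac (k + 4) (k + 3) : ℚ)
            = ((k : ℚ) + 4) * (eulerNum (k + 3) : ℚ) - (eulerNum (k + 4) : ℚ) := by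
          rw [show Ac (k + 4) (k + 3) = Ac ((k + 2) + 2) ((k + 2) + 1) from rfl, Ac_top (k + 2)]
          have h := Bc_n2' (k + 2)
          rw [show (k + 2) + 1 = k + 3 from rfl, show (k + 2) + 2 = k + 4 from rfl] at h
          rw [h]
          push_cast
          ring
        have hBc : (Bc (k + 4) k : ℚ)
            = Aq (k + 4) (k + 1) - (((k : ℚ) + 4) * (eulerNum (k + 3) : ℚ)
              - (eulerNum (k + 4) : ℚ)) := by
          rw [← hA1, ← hA3]
          linarith [hE1, hE2, hBtop]
        rw [hBc]
        rw [show k + 4 - 1 = k + 3 by omega]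
        rw [show Finset.Icc (k + 1) (k + 3) = insert (k + 1) (insert (k + 2) {k + 3}) from by
          ext x; simp [Finset.mem_Icc]; omega]
        rw [Finset.sum_insert (by simp only [Finset.mem_insert, Finset.mem_singleton, Finset.mem_Icc]; omega), Finset.sum_insert (by simp only [Finset.mem_insert, Finset.mem_singleton, Finset.mem_Icc]; omega),
          Finset.sum_singleton]
        rw [show k + 1 - k = 1 by omega, pc_one, show k + 2 - k = 2 by omega, pc_two,
          show k + 3 - k = 3 by omega, pc_three, show k + 4 - k = 4 by omega, tc_four]
        have hAq3 : Aq (k + 4) (k + 3) = ((k : ℚ) + 4) * (eulerNum (k + 3) : ℚ) := by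
          unfold Aq
          rw [show k + 4 - (k + 3) = 1 by omega, cCount_one, Nat.choose_succ_self_right]
          push_cast
          ring
        rw [hAq3]
        ring
      · -- s ≥ 1 : n ≥ k + 5
        have hn5 : k + 5 ≤ n := by omega
        have hA3 : (Ac n (k + 3) : ℚ) = Aq n (k + 3) := Ac_eval' n (k + 3) (by omega)
        have hIH := IH s (by omega) (k + 3) (by omega)
        have hBc : (Bc n k : ℚ) = Aq n (k + 1) - Aq n (k + 3) + (Bc n (k + 3) : ℚ) := by
          rw [← hA1, ← hA3]
          linarith [hE1, hE2]
        rw [hBc, hIH]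
        rw [show Finset.Icc (k + 1) (n - 1)
            = insert (k + 1) (insert (k + 2) (insert (k + 3) (Finset.Icc (k + 4) (n - 1)))) from by
          ext x; simp [Finset.mem_Icc]; omega]
        rw [Finset.sum_insert (by simp only [Finset.mem_insert, Finset.mem_singleton, Finset.mem_Icc]; omega),
          Finset.sum_insert (by simp only [Finset.mem_insert, Finset.mem_singleton, Finset.mem_Icc]; omega),
          Finset.sum_insert (by simp only [Finset.mem_insert, Finset.mem_singleton, Finset.mem_Icc]; omega)]
        rw [show k + 1 - k = 1 by omega, pc_one, show k + 2 - k = 2 by omega, pc_two,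
          show k + 3 - k = 3 by omega, pc_three]
        have hsum : (∑ d ∈ Finset.Icc (k + 4) (n - 1), pc (d - (k + 3)) * Aq n d)
            = ∑ d ∈ Finset.Icc (k + 4) (n - 1), pc (d - k) * Aq n d := by
          apply Finset.sum_congr rfl
          intro d hd
          simp only [Finset.mem_Icc] at hd
          rw [show d - k = (d - (k + 3)) + 3 by omega, pc_shift]
        have htc : tc (n - (k + 3)) = tc (n - k) := by
          rw [show n - k = (n - (k + 3)) + 3 by omega]
          rw [tc_shift (by omega)]
        rw [hsum, htc]
        ring
    done

lemma Bc_zero_eq_cCount (n : ℕ) (hn : 2 ≤ n) : Bc n 0 = cCount n := by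
  unfold Bc
  rw [cCount_cnt]
  apply cnt_congr
  intro σ
  constructor
  · rintro ⟨hp, hq, hl⟩
    exact ⟨fun i h1 h2 => hq i h1 (by omega), Or.inr hl⟩
  · rintro ⟨hq, hl⟩
    refine ⟨fun i h1 h2 => by omega, fun i h1 h2 => hq i h1 (by omega), ?_⟩
    rcases hl with h | h
    · omega
    · exact h

lemma REC (n : ℕ) (hn : 2 ≤ n) : (cCount n : ℚ)
    = (∑ d ∈ Finset.Icc 1 (n - 1), pc d * Aq n d) + tc n * (eulerNum n : ℚ) := by
  have harg : 0 + (n - 1) + 1 = n := by omega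
  have hchain := chain n hn (n - 1) 0 harg
  rw [Bc_zero_eq_cCount n hn] at hchain
  rw [hchain]
  simp

end Aux6

section Final

open Finset

lemma factorial_ne_zero_q (k : ℕ) : (k.factorial : ℚ) ≠ 0 := by
  exact_mod_cast Nat.factorial_ne_zero k

lemma Aq_div (n d : ℕ) (hd : d ≤ n) :
    Aq n d / (n.factorial : ℚ) = ((eulerNum d : ℚ) / d.factorial)
      * ((cCount (n - d) : ℚ) / (n - d).factorial) := by
  unfold Aq
  have hch : ((n.choose d : ℚ)) * d.factorial * (n - d).factorial = n.factorial := by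
    exact_mod_cast congrArg (Nat.cast : ℕ → ℚ) (Nat.choose_mul_factorial_mul_factorial hd)
  field_simp
  rw [← hch]
  ring

lemma sLa_eq (a : ℕ) :
    (if a % 3 = 0 then (eulerNum a : ℚ) / a.factorial
      else if a % 3 = 1 then -((eulerNum a : ℚ) / a.factorial) else 0)
    = -(pc a * ((eulerNum a : ℚ) / a.factorial)) := by
  unfold pc
  rcases (by omega : a % 3 = 0 ∨ a % 3 = 1 ∨ a % 3 = 2) with h | h | h <;> simp [h]

theorem statement17' :
    (PowerSeries.mk (fun n : ℕ =>
        if n % 3 = 0 then (eulerNum n : ℚ) / n.factorial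
        else if n % 3 = 1 then -((eulerNum n : ℚ) / n.factorial)
        else 0)) *
      (PowerSeries.mk (fun n : ℕ => (cCount n : ℚ) / n.factorial)) =
    PowerSeries.mk (fun n : ℕ =>
        if n % 3 = 1 then (eulerNum n : ℚ) / n.factorial
        else if n % 3 = 2 then -((eulerNum n : ℚ) / n.factorial)
        else 0) := by
  ext n
  rw [PowerSeries.coeff_mul, Finset.Nat.sum_antidiagonal_eq_sum_range_succ_mk]
  simp only [PowerSeries.coeff_mk]
  rcases (by omega : n = 0 ∨ n = 1 ∨ 2 ≤ n) with rfl | rfl | hn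
  · simp [cCount_zero]
  · rw [show Finset.range 2 = {0, 1} from rfl]
    rw [Finset.sum_insert (by simp), Finset.sum_singleton]
    norm_num [cCount_zero, cCount_one, eulerNum_one, eulerNum_zero]
  · -- main case
    rw [show Finset.range (n + 1) = insert 0 (insert n (Finset.Icc 1 (n - 1))) from by
      ext x; simp only [Finset.mem_range, Finset.mem_insert, Finset.mem_Icc]; omega]
    rw [Finset.sum_insert (by simp only [Finset.mem_insert, Finset.mem_Icc]; omega),
      Finset.sum_insert (by simp only [Finset.mem_Icc]; omega)]
    rw [Nat.sub_self, cCount_zero]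
    rw [show n - 0 = n by omega]
    have h0 : (0 : ℕ) % 3 = 0 := rfl
    rw [if_pos h0]
    rw [eulerNum_zero]
    have hrec := REC n hn
    have hdiv : (cCount n : ℚ) / (n.factorial : ℚ)
        = (∑ d ∈ Finset.Icc 1 (n - 1),
            pc d * (((eulerNum d : ℚ) / d.factorial)
              * ((cCount (n - d) : ℚ) / (n - d).factorial)))
          + tc n * ((eulerNum n : ℚ) / n.factorial) := by
      rw [hrec, add_div, Finset.sum_div]
      congr 1
      · apply Finset.sum_congr rfl
        intro d hd
        simp only [Finset.mem_Icc] at hd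
        rw [mul_div_assoc, Aq_div n d (by omega)]
      · ring
    have hterm : ∀ d ∈ Finset.Icc 1 (n - 1),
        (if d % 3 = 0 then (eulerNum d : ℚ) / d.factorial
          else if d % 3 = 1 then -((eulerNum d : ℚ) / d.factorial) else 0)
            * ((cCount (n - d) : ℚ) / (n - d).factorial)
        = -(pc d * (((eulerNum d : ℚ) / d.factorial)
            * ((cCount (n - d) : ℚ) / (n - d).factorial))) := by
      intro d _
      rw [sLa_eq d]
      ring
    rw [Finset.sum_congr rfl hterm]
    rw [Finset.sum_neg_distrib]
    have hE0 : ((1 : ℕ) : ℚ) / (Nat.factorial 0 : ℚ) = 1 := by norm_num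
    rw [Nat.factorial_zero]
    push_cast
    rw [show ((1 : ℚ) / 1) * ((cCount n : ℚ) / n.factorial) = (cCount n : ℚ) / n.factorial by ring]
    rw [hdiv]
    have htc : tc n * ((eulerNum n : ℚ) / n.factorial)
        = (if n % 3 = 1 then (eulerNum n : ℚ) / n.factorial
            else if n % 3 = 2 then -((eulerNum n : ℚ) / n.factorial) else 0) := by
      unfold tc
      rcases (by omega : n % 3 = 0 ∨ n % 3 = 1 ∨ n % 3 = 2) with h | h | h <;>
        simp [h, show n ≠ 1 by omega]
    rw [← htc]
    ring

end Final
/-- in `ℚ⟦X⟧`,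
`(Σₙ (E_{3n}·X^{3n}/(3n)! − E_{3n+1}·X^{3n+1}/(3n+1)!)) · (Σₙ c(n)·Xⁿ/n!)
  = Σₙ (E_{3n+1}·X^{3n+1}/(3n+1)! − E_{3n+2}·X^{3n+2}/(3n+2)!)`. -/
theorem statement17 :
    (PowerSeries.mk (fun n : ℕ =>
        if n % 3 = 0 then (eulerNum n : ℚ) / n.factorial
        else if n % 3 = 1 then -((eulerNum n : ℚ) / n.factorial)
        else 0)) *
      (PowerSeries.mk (fun n : ℕ => (cCount n : ℚ) / n.factorial)) =
    PowerSeries.mk (fun n : ℕ =>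
        if n % 3 = 1 then (eulerNum n : ℚ) / n.factorial
        else if n % 3 = 2 then -((eulerNum n : ℚ) / n.factorial)
        else 0) := by
  exact statement17'
end

section
/- Let d(n) be the number of permutations of [n] all of whose alternating runs have length less than 3 and whose last alternating run has length 2 (for n ≥ 2 this means: every i ∈ {1,…,n−2} has i or i+1 an alternating descent, and n−1 is not an alternating descent; d(0)=d(1)=0). Then in ℚ⟦X⟧: (Σ_{n=0}^∞ (E_{3n}·X^{3n}/(3n)! − E_{3n+1}·X^{3n+1}/(3n+1)!)) · (Σ_{n=0}^∞ d(n)·Xⁿ/n!) = Σ_{n=0}^∞ (E_{3n+2}·X^{3n+2}/(3n+2)! − E_{3n+3}·X^{3n+3}/(3n+3)!). -/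
/-- `dCount n`: the number of permutations of `[n]` all of whose alternating runs have
length less than 3 and whose last alternating run has length 2. -/
noncomputable def dCount (n : ℕ) : ℕ :=
  Nat.card {σ : Equiv.Perm (Fin n) //
    (∀ i, 1 ≤ i → i ≤ n - 2 → (IsAltDescent σ i ∨ IsAltDescent σ (i + 1))) ∧
    2 ≤ n ∧ ¬ IsAltDescent σ (n - 1)}


/-! ### Auxiliary development -/

namespace St18

open Finset Equiv

/-- Alternating descent with parity offset `b`. -/
def adb (b : ℕ) {n : ℕ} (σ : Equiv.Perm (Fin n)) (i : ℕ) : Prop :=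
  1 ≤ i ∧ i < n ∧
    (if (i + b) % 2 = 1 then permEnt σ (i + 1) < permEnt σ i
     else permEnt σ i < permEnt σ (i + 1))

lemma permEnt_eq {n : ℕ} (σ : Equiv.Perm (Fin n)) (i : ℕ) (h1 : 1 ≤ i) (h2 : i ≤ n) :
    permEnt σ i = (σ ⟨i - 1, by omega⟩ : ℕ) + 1 := by
  unfold permEnt
  rw [dif_pos ⟨h1, h2⟩]

lemma permEnt_lt_iff {n : ℕ} (σ : Equiv.Perm (Fin n)) (i j : ℕ)
    (h1 : 1 ≤ i) (h2 : i ≤ n) (h3 : 1 ≤ j) (h4 : j ≤ n) :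
    permEnt σ i < permEnt σ j ↔ (σ ⟨i - 1, by omega⟩ : Fin n) < σ ⟨j - 1, by omega⟩ := by
  rw [permEnt_eq σ i h1 h2, permEnt_eq σ j h3 h4, Fin.lt_def]
  omega

lemma permEnt_ne {n : ℕ} (σ : Equiv.Perm (Fin n)) (i j : ℕ)
    (h1 : 1 ≤ i) (h2 : i ≤ n) (h3 : 1 ≤ j) (h4 : j ≤ n) (hij : i ≠ j) :
    permEnt σ i ≠ permEnt σ j := by
  rw [permEnt_eq σ i h1 h2, permEnt_eq σ j h3 h4]
  intro h
  have := σ.injective (Fin.val_injective (by omega : ((σ ⟨i-1, by omega⟩ : Fin n) : ℕ) = (σ ⟨j-1, by omega⟩ : ℕ)))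
  have : i - 1 = j - 1 := congrArg Fin.val this
  omega

lemma isAltDescent_iff_adb {n : ℕ} (σ : Equiv.Perm (Fin n)) (i : ℕ) :
    IsAltDescent σ i ↔ adb 0 σ i := by
  unfold IsAltDescent adb
  simp only [Nat.add_zero]
  rcases Nat.even_or_odd i with h | h
  · have h2 : i % 2 = 0 := Nat.even_iff.mp h
    rw [if_neg (by omega : ¬ i % 2 = 1)]
    constructor
    · rintro ⟨a, b, (⟨h1, _⟩ | ⟨_, hc⟩)⟩
      · omega
      · exact ⟨a, b, hc⟩
    · rintro ⟨a, b, hc⟩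
      exact ⟨a, b, Or.inr ⟨h2, hc⟩⟩
  · have h2 : i % 2 = 1 := Nat.odd_iff.mp h
    rw [if_pos h2]
    constructor
    · rintro ⟨a, b, (⟨_, hc⟩ | ⟨h1, _⟩)⟩
      · exact ⟨a, b, hc⟩
      · omega
    · rintro ⟨a, b, hc⟩
      exact ⟨a, b, Or.inl ⟨h2, hc⟩⟩

/-- For in-range `i`, not being an offset-`b` descent is the same as being an
offset-`b+1` descent. -/
lemma not_adb_iff {n : ℕ} (σ : Equiv.Perm (Fin n)) (b i : ℕ) (h1 : 1 ≤ i) (h2 : i < n) :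
    ¬ adb b σ i ↔ adb (b + 1) σ i := by
  have hne : permEnt σ i ≠ permEnt σ (i + 1) :=
    permEnt_ne σ i (i+1) h1 (by omega) (by omega) (by omega) (by omega)
  have htot : permEnt σ i < permEnt σ (i+1) ∨ permEnt σ (i+1) < permEnt σ i := by omega
  unfold adb
  rcases Nat.even_or_odd (i + b) with h | h
  · have e1 : (i + b) % 2 = 0 := Nat.even_iff.mp h
    have e2 : (i + (b+1)) % 2 = 1 := by omega
    rw [if_neg (by omega), if_pos e2]
    omega
  · have e1 : (i + b) % 2 = 1 := Nat.odd_iff.mp h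
    have e2 : ¬ ((i + (b+1)) % 2 = 1) := by omega
    rw [if_pos e1, if_neg e2]
    omega

/-- `adb` only depends on the offset mod 2. -/
lemma adb_congr_mod {n : ℕ} (σ : Equiv.Perm (Fin n)) (b c i : ℕ) (h : b % 2 = c % 2) :
    adb b σ i ↔ adb c σ i := by
  unfold adb
  have : (i + b) % 2 = (i + c) % 2 := by omega
  rw [this]

end St18

namespace St18

open Finset Equiv

/-- "Ascents" (no alternating descent, offset `b`) at all positions `1 ≤ i ≤ j`. -/
def ascTo (b : ℕ) {n : ℕ} (σ : Equiv.Perm (Fin n)) (j : ℕ) : Prop :=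
  ∀ i, 1 ≤ i → i ≤ j → ¬ adb b σ i

/-- Covering condition from position `s` on: every `s ≤ g ≤ n-2` has a descent at `g` or `g+1`. -/
def covFrom (b : ℕ) {n : ℕ} (σ : Equiv.Perm (Fin n)) (s : ℕ) : Prop :=
  ∀ g, s ≤ g → g ≤ n - 2 → (adb b σ g ∨ adb b σ (g + 1))

/-- No descent at the last position. -/
def lastOK (b : ℕ) {n : ℕ} (σ : Equiv.Perm (Fin n)) : Prop := ¬ adb b σ (n - 1)

noncomputable def cntW (n j b : ℕ) : ℕ :=
  Nat.card {σ : Equiv.Perm (Fin n) // ascTo b σ j ∧ covFrom b σ (j + 1) ∧ lastOK b σ}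

noncomputable def cntV (n j b : ℕ) : ℕ :=
  Nat.card {σ : Equiv.Perm (Fin n) // ascTo b σ j ∧ covFrom b σ (j + 2) ∧ lastOK b σ}

noncomputable def cntE (n b : ℕ) : ℕ :=
  Nat.card {σ : Equiv.Perm (Fin n) // ascTo b σ (n - 1)}

noncomputable def cntD (n b : ℕ) : ℕ :=
  Nat.card {σ : Equiv.Perm (Fin n) // covFrom b σ 1 ∧ lastOK b σ}

lemma card_congr_iff {α : Type*} {P Q : α → Prop} (h : ∀ x, P x ↔ Q x) :
    Nat.card {x // P x} = Nat.card {x // Q x} :=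
  Nat.card_congr (Equiv.subtypeEquivRight h)

lemma card_split {α : Type*} [Finite α] (P Q : α → Prop) :
    Nat.card {x // P x} = Nat.card {x // P x ∧ Q x} + Nat.card {x // P x ∧ ¬ Q x} := by
  classical
  rw [← Nat.card_sum]
  apply Nat.card_congr
  exact {
    toFun := fun x => if h : Q x.1 then Sum.inl ⟨x.1, x.2, h⟩ else Sum.inr ⟨x.1, x.2, h⟩
    invFun := Sum.elim (fun a => ⟨a.1, a.2.1⟩) (fun a => ⟨a.1, a.2.1⟩)
    left_inv := by
      rintro ⟨x, hx⟩
      by_cases h : Q x <;> simp [h]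
    right_inv := by
      rintro (⟨x, hx⟩ | ⟨x, hx⟩) <;> simp [hx.2] }

/-- The complementation bijection on permutations. -/
def complEquiv (n : ℕ) : Equiv.Perm (Fin n) ≃ Equiv.Perm (Fin n) where
  toFun σ := σ.trans Fin.revPerm
  invFun σ := σ.trans Fin.revPerm
  left_inv σ := by
    ext x
    simp [Fin.rev_rev]
  right_inv σ := by
    ext x
    simp [Fin.rev_rev]

lemma permEnt_compl {n : ℕ} (σ : Equiv.Perm (Fin n)) (i : ℕ) (h1 : 1 ≤ i) (h2 : i ≤ n) :
    permEnt (complEquiv n σ) i = n + 1 - permEnt σ i := by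
  rw [permEnt_eq _ i h1 h2, permEnt_eq σ i h1 h2]
  have hb : ((σ ⟨i - 1, by omega⟩ : Fin n) : ℕ) < n := (σ _).isLt
  show ((Fin.revPerm (σ ⟨i - 1, by omega⟩) : Fin n) : ℕ) + 1 = n + 1 - _
  simp only [Fin.revPerm_apply, Fin.val_rev]
  omega

lemma permEnt_le {n : ℕ} (σ : Equiv.Perm (Fin n)) (i : ℕ) (h1 : 1 ≤ i) (h2 : i ≤ n) :
    1 ≤ permEnt σ i ∧ permEnt σ i ≤ n := by
  rw [permEnt_eq σ i h1 h2]
  have := (σ ⟨i - 1, by omega⟩).isLt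
  omega

lemma adb_compl {n : ℕ} (σ : Equiv.Perm (Fin n)) (b i : ℕ) :
    adb b (complEquiv n σ) i ↔ adb (b + 1) σ i := by
  unfold adb
  by_cases hr : 1 ≤ i ∧ i < n
  · obtain ⟨h1, h2⟩ := hr
    rw [permEnt_compl σ i h1 (by omega), permEnt_compl σ (i+1) (by omega) (by omega)]
    have e1 := permEnt_le σ i h1 (by omega)
    have e2 := permEnt_le σ (i+1) (by omega) (by omega)
    rcases Nat.even_or_odd (i + b) with h | h
    · have p1 : ¬ ((i + b) % 2 = 1) := by
        have := Nat.even_iff.mp h; omega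
      have p2 : (i + (b + 1)) % 2 = 1 := by
        have := Nat.even_iff.mp h; omega
      rw [if_neg p1, if_pos p2]
      omega
    · have p1 : (i + b) % 2 = 1 := Nat.odd_iff.mp h
      have p2 : ¬ ((i + (b + 1)) % 2 = 1) := by omega
      rw [if_pos p1, if_neg p2]
      omega
  · constructor <;> (rintro ⟨a, c, -⟩; omega)

lemma ascTo_congr_mod {n : ℕ} (σ : Equiv.Perm (Fin n)) {b c : ℕ} (j : ℕ) (h : b % 2 = c % 2) :
    ascTo b σ j ↔ ascTo c σ j := by
  unfold ascTo
  constructor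
  · intro hh i a1 a2
    rw [← adb_congr_mod σ b c i h]
    exact hh i a1 a2
  · intro hh i a1 a2
    rw [adb_congr_mod σ b c i h]
    exact hh i a1 a2

lemma covFrom_congr_mod {n : ℕ} (σ : Equiv.Perm (Fin n)) {b c : ℕ} (s : ℕ) (h : b % 2 = c % 2) :
    covFrom b σ s ↔ covFrom c σ s := by
  unfold covFrom
  constructor
  · intro hh g a1 a2
    rcases hh g a1 a2 with h' | h'
    · exact Or.inl ((adb_congr_mod σ b c g h).mp h')
    · exact Or.inr ((adb_congr_mod σ b c (g+1) h).mp h')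
  · intro hh g a1 a2
    rcases hh g a1 a2 with h' | h'
    · exact Or.inl ((adb_congr_mod σ b c g h).mpr h')
    · exact Or.inr ((adb_congr_mod σ b c (g+1) h).mpr h')

lemma lastOK_congr_mod {n : ℕ} (σ : Equiv.Perm (Fin n)) {b c : ℕ} (h : b % 2 = c % 2) :
    lastOK b σ ↔ lastOK c σ := by
  unfold lastOK
  rw [adb_congr_mod σ b c (n-1) h]

lemma cntE_succ (n b : ℕ) : cntE n b = cntE n (b + 1) := by
  unfold cntE
  apply Nat.card_congr
  apply Equiv.subtypeEquiv (complEquiv n)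
  intro σ
  unfold ascTo
  constructor
  · intro hh i a1 a2
    intro hcon
    have : adb (b + 2) σ i := (adb_compl σ (b+1) i).mp hcon
    exact hh i a1 a2 ((adb_congr_mod σ (b+2) b i (by omega)).mp this)
  · intro hh i a1 a2
    intro hcon
    have : adb (b + 2) σ i := (adb_congr_mod σ b (b+2) i (by omega)).mp hcon
    exact hh i a1 a2 ((adb_compl σ (b+1) i).mpr this)

lemma cntD_succ (n b : ℕ) : cntD n b = cntD n (b + 1) := by
  unfold cntD
  apply Nat.card_congr
  apply Equiv.subtypeEquiv (complEquiv n)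
  intro σ
  have key : ∀ i, adb (b+1) (complEquiv n σ) i ↔ adb b σ i := by
    intro i
    rw [adb_compl σ (b+1) i]
    exact adb_congr_mod σ (b+2) b i (by omega)
  constructor
  · rintro ⟨hc, hl⟩
    refine ⟨?_, ?_⟩
    · intro g a1 a2
      rcases hc g a1 a2 with h' | h'
      · exact Or.inl ((key g).mpr h')
      · exact Or.inr ((key (g+1)).mpr h')
    · intro hcon
      exact hl ((key (n-1)).mp hcon)
  · rintro ⟨hc, hl⟩
    refine ⟨?_, ?_⟩
    · intro g a1 a2
      rcases hc g a1 a2 with h' | h'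
      · exact Or.inl ((key g).mp h')
      · exact Or.inr ((key (g+1)).mp h')
    · intro hcon
      exact hl ((key (n-1)).mpr hcon)

lemma cntE_congr_mod (n : ℕ) {b c : ℕ} (h : b % 2 = c % 2) : cntE n b = cntE n c := by
  unfold cntE
  exact card_congr_iff (fun σ => ascTo_congr_mod σ _ h)

lemma cntD_congr_mod (n : ℕ) {b c : ℕ} (h : b % 2 = c % 2) : cntD n b = cntD n c := by
  unfold cntD
  exact card_congr_iff (fun σ =>
    and_congr (covFrom_congr_mod σ _ h) (lastOK_congr_mod σ h))

lemma cntE_eq_eulerNum (n b : ℕ) : cntE n b = eulerNum n := by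
  have h1 : cntE n 1 = eulerNum n := by
    unfold cntE eulerNum
    apply card_congr_iff
    intro σ
    unfold ascTo IsAltPerm
    constructor
    · intro hh i a1 a2
      have := hh i a1 (by omega)
      rw [not_adb_iff σ 1 i a1 a2] at this
      have h0 : adb 0 σ i := (adb_congr_mod σ 2 0 i (by omega)).mp this
      rw [← isAltDescent_iff_adb] at h0
      obtain ⟨-, -, hc | hc⟩ := h0
      · exact ⟨fun _ => hc.2, fun hcon => by omega⟩
      · exact ⟨fun hcon => by omega, fun _ => hc.2⟩
    · intro hh i a1 a2
      have a2' : i < n := by omega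
      rw [not_adb_iff σ 1 i a1 a2']
      apply (adb_congr_mod σ 0 2 i (by omega)).mp
      rw [← isAltDescent_iff_adb]
      obtain ⟨hx, hy⟩ := hh i a1 a2'
      refine ⟨a1, a2', ?_⟩
      rcases Nat.even_or_odd i with h | h
      · exact Or.inr ⟨Nat.even_iff.mp h, hy (Nat.even_iff.mp h)⟩
      · exact Or.inl ⟨Nat.odd_iff.mp h, hx (Nat.odd_iff.mp h)⟩
  rcases Nat.even_or_odd b with h | h
  · rw [cntE_succ n b, cntE_congr_mod n (show (b+1) % 2 = 1 % 2 by
      have := Nat.even_iff.mp h; omega), h1]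
  · rw [cntE_congr_mod n (show b % 2 = 1 % 2 by have := Nat.odd_iff.mp h; omega), h1]

lemma cntD_eq_cntD_zero (n b : ℕ) : cntD n b = cntD n 0 := by
  rcases Nat.even_or_odd b with h | h
  · exact cntD_congr_mod n (by have := Nat.even_iff.mp h; omega)
  · rw [cntD_succ n b]
    exact cntD_congr_mod n (by have := Nat.odd_iff.mp h; omega)

lemma dCount_eq_cntD (n : ℕ) (hn : 2 ≤ n) : dCount n = cntD n 0 := by
  unfold dCount cntD
  apply card_congr_iff
  intro σ
  constructor
  · rintro ⟨hc, -, hl⟩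
    refine ⟨?_, ?_⟩
    · intro g a1 a2
      rcases hc g a1 a2 with h' | h'
      · exact Or.inl ((isAltDescent_iff_adb σ g).mp h')
      · exact Or.inr ((isAltDescent_iff_adb σ (g+1)).mp h')
    · intro hcon
      exact hl ((isAltDescent_iff_adb σ (n-1)).mpr hcon)
  · rintro ⟨hc, hl⟩
    refine ⟨?_, hn, ?_⟩
    · intro g a1 a2
      rcases hc g a1 a2 with h' | h'
      · exact Or.inl ((isAltDescent_iff_adb σ g).mpr h')
      · exact Or.inr ((isAltDescent_iff_adb σ (g+1)).mpr h')
    · intro hcon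
      exact hl ((isAltDescent_iff_adb σ (n-1)).mp hcon)

lemma dCount_small (n : ℕ) (hn : n < 2) : dCount n = 0 := by
  unfold dCount
  rw [Nat.card_eq_zero]
  left
  constructor
  rintro ⟨σ, -, h, -⟩
  omega

lemma cntW_zero (n b : ℕ) : cntW n 0 b = cntD n b := by
  unfold cntW cntD
  apply card_congr_iff
  intro σ
  constructor
  · rintro ⟨-, hc, hl⟩; exact ⟨hc, hl⟩
  · rintro ⟨hc, hl⟩
    exact ⟨fun i a1 a2 => by omega, hc, hl⟩

end St18

namespace St18

open Finset Equiv

lemma ascTo_succ {n : ℕ} (σ : Equiv.Perm (Fin n)) (b j : ℕ) :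
    ascTo b σ (j + 1) ↔ ascTo b σ j ∧ ¬ adb b σ (j + 1) := by
  constructor
  · intro h
    exact ⟨fun i a1 a2 => h i a1 (by omega), h (j+1) (by omega) le_rfl⟩
  · rintro ⟨h1, h2⟩ i a1 a2
    rcases Nat.lt_or_ge i (j+1) with h | h
    · exact h1 i a1 (by omega)
    · have : i = j + 1 := by omega
      rw [this]; exact h2

lemma covFrom_succ {n : ℕ} (σ : Equiv.Perm (Fin n)) (b s : ℕ) (hs : s ≤ n - 2) :
    covFrom b σ s ↔ (adb b σ s ∨ adb b σ (s + 1)) ∧ covFrom b σ (s + 1) := by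
  constructor
  · intro h
    exact ⟨h s le_rfl hs, fun g a1 a2 => h g (by omega) a2⟩
  · rintro ⟨h1, h2⟩ g a1 a2
    rcases Nat.lt_or_ge g (s+1) with h | h
    · have : g = s := by omega
      rw [this]; exact h1
    · exact h2 g h a2

lemma covFrom_mono {n : ℕ} (σ : Equiv.Perm (Fin n)) (b : ℕ) {s t : ℕ} (hst : s ≤ t)
    (h : covFrom b σ s) : covFrom b σ t :=
  fun g a1 a2 => h g (by omega) a2

lemma covFrom_vacuous {n : ℕ} (σ : Equiv.Perm (Fin n)) (b s : ℕ) (hs : n - 2 < s) :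
    covFrom b σ s := by
  intro g a1 a2
  omega

lemma not_adb_oor {n : ℕ} (σ : Equiv.Perm (Fin n)) (b i : ℕ) (h : n ≤ i) :
    ¬ adb b σ i := by
  rintro ⟨-, hc, -⟩
  omega

lemma cntW_boundary {n : ℕ} (j b : ℕ) (hn : 2 ≤ n) (hj : n - 2 ≤ j) :
    cntW n j b = cntE n b := by
  unfold cntW cntE
  apply card_congr_iff
  intro σ
  constructor
  · rintro ⟨ha, -, hl⟩ i a1 a2
    rcases Nat.lt_or_ge i (n-1) with h | h
    · exact ha i a1 (by omega)
    · have : i = n - 1 := by omega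
      rw [this]; exact hl
  · intro ha
    refine ⟨?_, covFrom_vacuous σ b _ (by omega), ha (n-1) (by omega) le_rfl⟩
    intro i a1 a2
    rcases Nat.lt_or_ge i n with h | h
    · exact ha i a1 (by omega)
    · exact not_adb_oor σ b i h

lemma cntV_boundary {n : ℕ} (j b : ℕ) (hn : 2 ≤ n) (hj : n - 2 ≤ j) :
    cntV n j b = cntE n b := by
  unfold cntV cntE
  apply card_congr_iff
  intro σ
  constructor
  · rintro ⟨ha, -, hl⟩ i a1 a2
    rcases Nat.lt_or_ge i (n-1) with h | h
    · exact ha i a1 (by omega)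
    · have : i = n - 1 := by omega
      rw [this]; exact hl
  · intro ha
    refine ⟨?_, covFrom_vacuous σ b _ (by omega), ha (n-1) (by omega) le_rfl⟩
    intro i a1 a2
    rcases Nat.lt_or_ge i n with h | h
    · exact ha i a1 (by omega)
    · exact not_adb_oor σ b i h

/-- The key three-term recurrence. -/
lemma three_term (n j b : ℕ) (hj : j + 3 ≤ n) :
    cntW n j b + cntW n (j+1) b + cntW n (j+2) b = cntV n j b + cntV n (j+1) b := by
  have hj1 : j + 1 ≤ n - 2 := by omega
  set X := Nat.card {σ : Equiv.Perm (Fin n) //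
    (ascTo b σ j ∧ covFrom b σ (j+2) ∧ lastOK b σ) ∧ adb b σ (j+1)} with hX
  set Y := Nat.card {σ : Equiv.Perm (Fin n) //
    (ascTo b σ (j+1) ∧ covFrom b σ (j+3) ∧ lastOK b σ) ∧ adb b σ (j+2)} with hY
  have hV1 : cntV n j b = X + cntW n (j+1) b := by
    unfold cntV
    rw [card_split (fun σ => ascTo b σ j ∧ covFrom b σ (j+2) ∧ lastOK b σ)
      (fun σ => adb b σ (j+1))]
    congr 1
    unfold cntW
    apply card_congr_iff
    intro σ
    constructor
    · rintro ⟨⟨h1, h2, h3⟩, h4⟩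
      exact ⟨(ascTo_succ σ b _).mpr ⟨h1, h4⟩, h2, h3⟩
    · rintro ⟨h1, h2, h3⟩
      have h1' := (ascTo_succ σ b _).mp h1
      exact ⟨⟨h1'.1, h2, h3⟩, h1'.2⟩
  have hV2 : cntV n (j+1) b = Y + cntW n (j+2) b := by
    unfold cntV
    rw [card_split (fun σ => ascTo b σ (j+1) ∧ covFrom b σ (j+3) ∧ lastOK b σ)
      (fun σ => adb b σ (j+2))]
    congr 1
    unfold cntW
    apply card_congr_iff
    intro σ
    constructor
    · rintro ⟨⟨h1, h2, h3⟩, h4⟩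
      exact ⟨(ascTo_succ σ b _).mpr ⟨h1, h4⟩, h2, h3⟩
    · rintro ⟨h1, h2, h3⟩
      have h1' := (ascTo_succ σ b _).mp h1
      exact ⟨⟨h1'.1, h2, h3⟩, h1'.2⟩
  have hW : cntW n j b = X + Y := by
    unfold cntW
    rw [card_split (fun σ => ascTo b σ j ∧ covFrom b σ (j+1) ∧ lastOK b σ)
      (fun σ => adb b σ (j+1))]
    congr 1
    · -- adb (j+1) side equals X
      apply card_congr_iff
      intro σ
      constructor
      · rintro ⟨⟨h1, h2, h3⟩, h4⟩
        exact ⟨⟨h1, ((covFrom_succ σ b (j+1) hj1).mp h2).2, h3⟩, h4⟩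
      · rintro ⟨⟨h1, h2, h3⟩, h4⟩
        refine ⟨⟨h1, ?_, h3⟩, h4⟩
        rw [covFrom_succ σ b (j+1) hj1]
        exact ⟨Or.inl h4, h2⟩
    · -- ¬ adb (j+1) side equals Y
      apply card_congr_iff
      intro σ
      constructor
      · rintro ⟨⟨h1, h2, h3⟩, h4⟩
        have hcl := ((covFrom_succ σ b (j+1) hj1).mp h2).1
        have h5 : adb b σ (j+2) := by
          rcases hcl with h | h
          · exact absurd h h4
          · exact h
        refine ⟨⟨(ascTo_succ σ b j).mpr ⟨h1, h4⟩, ?_, h3⟩, h5⟩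
        exact covFrom_mono σ b (by omega) h2
      · rintro ⟨⟨h1, h2, h3⟩, h4⟩
        have h1' := (ascTo_succ σ b j).mp h1
        refine ⟨⟨h1'.1, ?_, h3⟩, h1'.2⟩
        intro g a1 a2
        rcases Nat.lt_or_ge g (j+2) with h | h
        · have : g = j + 1 := by omega
          rw [this]; exact Or.inr h4
        · rcases Nat.lt_or_ge g (j+3) with h' | h'
          · have : g = j + 2 := by omega
            rw [this]; exact Or.inl h4
          · exact h2 g h' a2
  omega

end St18

namespace St18

open Finset Equiv

section Split

variable {p q : ℕ}

/-- The set of values occupying the first `p` positions. -/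
def prefSet (π : Equiv.Perm (Fin (p + q))) : Finset (Fin (p + q)) :=
  (univ : Finset (Fin p)).image (fun i => π (Fin.castAdd q i))

lemma prefSet_card (π : Equiv.Perm (Fin (p + q))) : (prefSet π).card = p := by
  have hinj : Function.Injective (fun i : Fin p => π (Fin.castAdd q i)) :=
    fun a b h => Fin.castAdd_injective p q (π.injective h)
  rw [prefSet, Finset.card_image_of_injective _ hinj, card_univ, Fintype.card_fin]

lemma prefSet_compl_card (π : Equiv.Perm (Fin (p + q))) : (prefSet π)ᶜ.card = q := by
  rw [Finset.card_compl, prefSet_card, Fintype.card_fin]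
  omega

lemma suffix_mem_compl (π : Equiv.Perm (Fin (p + q))) (i : Fin q) :
    π (Fin.natAdd p i) ∈ (prefSet π)ᶜ := by
  rw [Finset.mem_compl, prefSet, Finset.mem_image]
  rintro ⟨j, -, hj⟩
  have := π.injective hj
  have : (p : ℕ) + (i : ℕ) = (j : ℕ) := by
    have := congrArg Fin.val this
    simpa using this.symm
  have := j.isLt
  omega

/-- Pattern of the first `p` values. -/
noncomputable def prefPat (π : Equiv.Perm (Fin (p + q))) : Equiv.Perm (Fin p) := by
  refine Equiv.ofBijective
    (fun i => ((prefSet π).orderIsoOfFin (prefSet_card π)).symm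
      ⟨π (Fin.castAdd q i), by rw [prefSet]; exact Finset.mem_image_of_mem _ (mem_univ i)⟩) ?_
  rw [← Finite.injective_iff_bijective]
  intro i j hij
  have := congrArg ((prefSet π).orderIsoOfFin (prefSet_card π)) hij
  simp only [OrderIso.apply_symm_apply] at this
  have := congrArg Subtype.val this
  exact Fin.castAdd_injective p q (π.injective this)

/-- Pattern of the last `q` values. -/
noncomputable def sufPat (π : Equiv.Perm (Fin (p + q))) : Equiv.Perm (Fin q) := by
  refine Equiv.ofBijective
    (fun i => ((prefSet π)ᶜ.orderIsoOfFin (prefSet_compl_card π)).symm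
      ⟨π (Fin.natAdd p i), suffix_mem_compl π i⟩) ?_
  rw [← Finite.injective_iff_bijective]
  intro i j hij
  have := congrArg ((prefSet π)ᶜ.orderIsoOfFin (prefSet_compl_card π)) hij
  simp only [OrderIso.apply_symm_apply] at this
  have := congrArg Subtype.val this
  have h2 := π.injective this
  have h3 := congrArg Fin.val h2
  simp only [Fin.coe_natAdd] at h3
  exact Fin.ext (by omega)

lemma prefPat_spec (π : Equiv.Perm (Fin (p + q))) (i : Fin p) :
    (((prefSet π).orderIsoOfFin (prefSet_card π)) (prefPat π i) : Fin (p + q)) =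
      π (Fin.castAdd q i) := by
  rw [prefPat]
  simp [Equiv.ofBijective_apply, OrderIso.apply_symm_apply]

lemma sufPat_spec (π : Equiv.Perm (Fin (p + q))) (i : Fin q) :
    ((((prefSet π)ᶜ).orderIsoOfFin (prefSet_compl_card π)) (sufPat π i) : Fin (p + q)) =
      π (Fin.natAdd p i) := by
  rw [sufPat]
  simp [Equiv.ofBijective_apply, OrderIso.apply_symm_apply]

lemma orderIsoOfFin_congr {α : Type*} [LinearOrder α] {A B : Finset α} {k : ℕ}
    (h : A = B) (hA : A.card = k) (hB : B.card = k) (x : Fin k) :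
    (A.orderIsoOfFin hA x : α) = B.orderIsoOfFin hB x := by
  subst h
  rfl

/-- The splitting map. -/
noncomputable def splitFun (π : Equiv.Perm (Fin (p + q))) :
    {A : Finset (Fin (p + q)) // A.card = p} × Equiv.Perm (Fin p) × Equiv.Perm (Fin q) :=
  (⟨prefSet π, prefSet_card π⟩, prefPat π, sufPat π)

lemma splitFun_injective : Function.Injective (splitFun (p := p) (q := q)) := by
  intro g1 g2 h
  rw [splitFun, splitFun, Prod.ext_iff, Prod.ext_iff, Subtype.ext_iff] at h
  obtain ⟨hA, hs, ht⟩ := h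
  simp only at hA hs ht
  ext x
  have hgoal : ∀ y, g1 y = g2 y := by
    intro y
    refine Fin.addCases (motive := fun y => g1 y = g2 y) (fun i => ?_) (fun i => ?_) y
    · show g1 (Fin.castAdd q i) = g2 (Fin.castAdd q i)
      have e1 := prefPat_spec g1 i
      have e2 := prefPat_spec g2 i
      rw [← e1, ← e2, hs]
      exact orderIsoOfFin_congr hA _ _ _
    · show g1 (Fin.natAdd p i) = g2 (Fin.natAdd p i)
      have e1 := sufPat_spec g1 i
      have e2 := sufPat_spec g2 i
      rw [← e1, ← e2, ht]
      exact orderIsoOfFin_congr (by rw [hA]) _ _ _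
  exact congrArg Fin.val (hgoal x)

/-- The splitting map is a bijection. -/
noncomputable def splitEquiv (p q : ℕ) :
    Equiv.Perm (Fin (p + q)) ≃
      ({A : Finset (Fin (p + q)) // A.card = p} × Equiv.Perm (Fin p) × Equiv.Perm (Fin q)) := by
  refine Equiv.ofBijective splitFun ?_
  rw [Fintype.bijective_iff_injective_and_card]
  refine ⟨splitFun_injective, ?_⟩
  rw [Fintype.card_perm, Fintype.card_prod, Fintype.card_prod, Fintype.card_perm,
    Fintype.card_perm, Fintype.card_finset_len, Fintype.card_fin, Fintype.card_fin,
    Fintype.card_fin]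
  have h := Nat.choose_mul_factorial_mul_factorial (Nat.le_add_right p q)
  rw [Nat.add_sub_cancel_left] at h
  rw [← h]
  ring

lemma splitEquiv_fst (π : Equiv.Perm (Fin (p + q))) :
    (splitEquiv p q π).1 = ⟨prefSet π, prefSet_card π⟩ := rfl

lemma splitEquiv_snd (π : Equiv.Perm (Fin (p + q))) :
    (splitEquiv p q π).2 = (prefPat π, sufPat π) := rfl

/-- Comparison transport on the prefix. -/
lemma pref_lt_iff (π : Equiv.Perm (Fin (p + q))) (i j : Fin p) :
    π (Fin.castAdd q i) < π (Fin.castAdd q j) ↔ prefPat π i < prefPat π j := by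
  rw [← prefPat_spec π i, ← prefPat_spec π j]
  rw [Subtype.coe_lt_coe]
  exact OrderIso.lt_iff_lt _

/-- Comparison transport on the suffix. -/
lemma suf_lt_iff (π : Equiv.Perm (Fin (p + q))) (i j : Fin q) :
    π (Fin.natAdd p i) < π (Fin.natAdd p j) ↔ sufPat π i < sufPat π j := by
  rw [← sufPat_spec π i, ← sufPat_spec π j]
  rw [Subtype.coe_lt_coe]
  exact OrderIso.lt_iff_lt _

/-- Transport of `adb` to the prefix pattern. -/
lemma adb_pref (π : Equiv.Perm (Fin (p + q))) (b i : ℕ) (h1 : 1 ≤ i) (h2 : i < p) :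
    adb b π i ↔ adb b (prefPat π) i := by
  have hpq : i < p + q := by omega
  unfold adb
  have c1 : permEnt π (i+1) < permEnt π i ↔
      permEnt (prefPat π) (i+1) < permEnt (prefPat π) i := by
    rw [permEnt_lt_iff π (i+1) i (by omega) (by omega) (by omega) (by omega),
      permEnt_lt_iff (prefPat π) (i+1) i (by omega) (by omega) (by omega) (by omega)]
    have ei : (⟨i - 1, by omega⟩ : Fin (p+q)) = Fin.castAdd q ⟨i - 1, by omega⟩ := rfl
    have ei1 : (⟨i + 1 - 1, by omega⟩ : Fin (p+q)) = Fin.castAdd q ⟨i + 1 - 1, by omega⟩ := rfl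
    rw [ei, ei1, pref_lt_iff]
  have c2 : permEnt π i < permEnt π (i+1) ↔
      permEnt (prefPat π) i < permEnt (prefPat π) (i+1) := by
    rw [permEnt_lt_iff π i (i+1) (by omega) (by omega) (by omega) (by omega),
      permEnt_lt_iff (prefPat π) i (i+1) (by omega) (by omega) (by omega) (by omega)]
    have ei : (⟨i - 1, by omega⟩ : Fin (p+q)) = Fin.castAdd q ⟨i - 1, by omega⟩ := rfl
    have ei1 : (⟨i + 1 - 1, by omega⟩ : Fin (p+q)) = Fin.castAdd q ⟨i + 1 - 1, by omega⟩ := rfl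
    rw [ei, ei1, pref_lt_iff]
  by_cases hp : (i + b) % 2 = 1
  · rw [if_pos hp, if_pos hp]
    omega
  · rw [if_neg hp, if_neg hp]
    omega

/-- Transport of `adb` to the suffix pattern. -/
lemma adb_suf (π : Equiv.Perm (Fin (p + q))) (b i : ℕ) (h1 : 1 ≤ i) (h2 : i < q) :
    adb b π (p + i) ↔ adb (b + p) (sufPat π) i := by
  unfold adb
  have c1 : permEnt π (p+i+1) < permEnt π (p+i) ↔
      permEnt (sufPat π) (i+1) < permEnt (sufPat π) i := by
    rw [permEnt_lt_iff π (p+i+1) (p+i) (by omega) (by omega) (by omega) (by omega),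
      permEnt_lt_iff (sufPat π) (i+1) i (by omega) (by omega) (by omega) (by omega)]
    have ei : (⟨p + i - 1, by omega⟩ : Fin (p+q)) = Fin.natAdd p ⟨i - 1, by omega⟩ := by
      apply Fin.ext
      simp only [Fin.coe_natAdd]
      omega
    have ei1 : (⟨p + i + 1 - 1, by omega⟩ : Fin (p+q)) = Fin.natAdd p ⟨i + 1 - 1, by omega⟩ := by
      apply Fin.ext
      simp only [Fin.coe_natAdd]
      omega
    rw [ei, ei1, suf_lt_iff]
  have c2 : permEnt π (p+i) < permEnt π (p+i+1) ↔
      permEnt (sufPat π) i < permEnt (sufPat π) (i+1) := by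
    rw [permEnt_lt_iff π (p+i) (p+i+1) (by omega) (by omega) (by omega) (by omega),
      permEnt_lt_iff (sufPat π) i (i+1) (by omega) (by omega) (by omega) (by omega)]
    have ei : (⟨p + i - 1, by omega⟩ : Fin (p+q)) = Fin.natAdd p ⟨i - 1, by omega⟩ := by
      apply Fin.ext
      simp only [Fin.coe_natAdd]
      omega
    have ei1 : (⟨p + i + 1 - 1, by omega⟩ : Fin (p+q)) = Fin.natAdd p ⟨i + 1 - 1, by omega⟩ := by
      apply Fin.ext
      simp only [Fin.coe_natAdd]
      omega
    rw [ei, ei1, suf_lt_iff]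
  have hpar : (p + i + b) % 2 = (i + (b + p)) % 2 := by omega
  by_cases hp : (p + i + b) % 2 = 1
  · rw [if_pos hp, if_pos (by omega : (i + (b + p)) % 2 = 1)]
    omega
  · rw [if_neg hp, if_neg (by omega : ¬ (i + (b + p)) % 2 = 1)]
    omega

end Split

end St18

namespace St18

open Finset Equiv

lemma cntV_split (n j b : ℕ) (hj : j + 3 ≤ n) :
    cntV n j b = n.choose (j+1) * (cntE (j+1) b * cntD (n-j-1) (b+(j+1))) := by
  obtain ⟨q, hq, rfl⟩ : ∃ q, 2 ≤ q ∧ n = (j+1)+q := ⟨n-j-1, by omega, by omega⟩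
  have e : (j+1)+q-j-1 = q := by omega
  rw [e]
  set p := j + 1 with hp
  -- transport the predicate through splitEquiv
  have key : cntV (p+q) j b =
      Nat.card {t : ({A : Finset (Fin (p+q)) // A.card = p} ×
          Equiv.Perm (Fin p) × Equiv.Perm (Fin q)) //
        True ∧ (ascTo b t.2.1 j ∧ (covFrom (b+p) t.2.2 1 ∧ lastOK (b+p) t.2.2))} := by
    unfold cntV
    apply Nat.card_congr
    apply Equiv.subtypeEquiv (splitEquiv p q)
    intro π
    have hsplit : splitEquiv p q π = (⟨prefSet π, prefSet_card π⟩, prefPat π, sufPat π) := rfl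
    rw [hsplit]
    simp only [true_and]
    have i1 : ascTo b π j ↔ ascTo b (prefPat π) j := by
      unfold ascTo
      constructor
      · intro h i a1 a2
        rw [← adb_pref π b i a1 (by omega)]
        exact h i a1 a2
      · intro h i a1 a2
        rw [adb_pref π b i a1 (by omega)]
        exact h i a1 a2
    have i2 : covFrom b π (j+2) ↔ covFrom (b+p) (sufPat π) 1 := by
      unfold covFrom
      constructor
      · intro h i a1 a2
        have hg := h (p+i) (by omega) (by omega)
        rcases hg with h' | h'
        · exact Or.inl ((adb_suf π b i a1 (by omega)).mp h')
        · have : p + i + 1 = p + (i+1) := by omega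
          rw [this] at h'
          exact Or.inr ((adb_suf π b (i+1) (by omega) (by omega)).mp h')
      · intro h g a1 a2
        have hi : g = p + (g - p) := by omega
        set i := g - p with hi2
        have a1' : 1 ≤ i := by omega
        have a2' : i ≤ q - 2 := by omega
        rcases h i a1' a2' with h' | h'
        · rw [hi]
          exact Or.inl ((adb_suf π b i a1' (by omega)).mpr h')
        · have : g + 1 = p + (i+1) := by omega
          rw [this]
          exact Or.inr ((adb_suf π b (i+1) (by omega) (by omega)).mpr h')
    have i3 : lastOK b π ↔ lastOK (b+p) (sufPat π) := by
      unfold lastOK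
      have : (p + q) - 1 = p + (q - 1) := by omega
      rw [this]
      rw [adb_suf π b (q-1) (by omega) (by omega)]
    rw [i1, i2, i3]
  rw [key]
  rw [Nat.card_congr (Equiv.subtypeProdEquivProd
    (p := fun _ : {A : Finset (Fin (p+q)) // A.card = p} => True)
    (q := fun s : Equiv.Perm (Fin p) × Equiv.Perm (Fin q) =>
      ascTo b s.1 j ∧ (covFrom (b+p) s.2 1 ∧ lastOK (b+p) s.2)))]
  rw [Nat.card_prod]
  rw [Nat.card_congr (Equiv.subtypeProdEquivProd
    (p := fun σ : Equiv.Perm (Fin p) => ascTo b σ j)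
    (q := fun τ : Equiv.Perm (Fin q) => covFrom (b+p) τ 1 ∧ lastOK (b+p) τ))]
  rw [Nat.card_prod]
  congr 1
  rw [Nat.card_congr (Equiv.subtypeUnivEquiv (fun _ => trivial)),
    Nat.card_eq_fintype_card, Fintype.card_finset_len, Fintype.card_fin]

end St18

namespace St18

open Finset Equiv

def epsI (m : ℕ) : ℤ := if m % 3 = 0 then 1 else if m % 3 = 1 then -1 else 0

def rhoI (m : ℕ) : ℤ := if m % 3 = 0 then 1 else if m % 3 = 1 then 0 else -1

lemma eps_cycle (m : ℕ) : epsI m + epsI (m+1) + epsI (m+2) = 0 := by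
  unfold epsI
  have h3 : m % 3 = 0 ∨ m % 3 = 1 ∨ m % 3 = 2 := by omega
  rcases h3 with h | h | h
  · rw [if_pos h, if_neg (by omega), if_pos (by omega), if_neg (by omega), if_neg (by omega)]
    norm_num
  · rw [if_neg (by omega), if_pos h, if_neg (by omega), if_neg (by omega), if_pos (by omega)]
    norm_num
  · rw [if_neg (by omega), if_neg (by omega), if_pos (by omega), if_neg (by omega),
      if_pos (by omega)]
    norm_num

lemma rho_cycle (t : ℕ) : rhoI (t+2) = - rhoI (t+1) - rhoI t := by
  unfold rhoI
  have h3 : t % 3 = 0 ∨ t % 3 = 1 ∨ t % 3 = 2 := by omega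
  rcases h3 with h | h | h
  · rw [if_neg (by omega), if_neg (by omega), if_neg (by omega), if_pos (by omega), if_pos h]
    norm_num
  · rw [if_pos (by omega), if_neg (by omega), if_neg (by omega), if_neg (by omega), if_pos h]
    norm_num
  · rw [if_neg (by omega), if_pos (by omega), if_pos (by omega), if_neg (by omega),
      if_neg (by omega)]
    norm_num

lemma sum_Icc_bot {M : Type*} [AddCommMonoid M] {a b : ℕ} (h : a ≤ b) (f : ℕ → M) :
    ∑ i ∈ Icc a b, f i = f a + ∑ i ∈ Icc (a+1) b, f i := by
  have he : Icc a b = insert a (Icc (a+1) b) := by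
    ext x
    simp only [mem_Icc, mem_insert]
    omega
  rw [he, Finset.sum_insert (by simp only [mem_Icc]; omega)]

lemma telescope_sum (n b j : ℕ) (hj : j + 3 ≤ n) :
    (∑ i ∈ Icc j (n-2), epsI (i+1-j) * (cntV n i b : ℤ))
      + (∑ i ∈ Icc (j+1) (n-2), epsI (i+1-(j+1)) * (cntV n i b : ℤ))
      + (∑ i ∈ Icc (j+2) (n-2), epsI (i+1-(j+2)) * (cntV n i b : ℤ)) =
      -(cntV n j b : ℤ) - (cntV n (j+1) b : ℤ) := by
  rw [sum_Icc_bot (by omega : j ≤ n-2), sum_Icc_bot (by omega : j+1 ≤ n-2),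
    sum_Icc_bot (by omega : j+1 ≤ n-2)]
  have e1 : epsI (j+1-j) = -1 := by
    have : j+1-j = 1 := by omega
    rw [this]; rfl
  have e2 : epsI (j+1+1-j) = 0 := by
    have : j+1+1-j = 2 := by omega
    rw [this]; rfl
  have e3 : epsI (j+1+1-(j+1)) = -1 := by
    have : j+1+1-(j+1) = 1 := by omega
    rw [this]; rfl
  rw [e1, e2, e3]
  have hzero : (∑ i ∈ Icc (j+2) (n-2), epsI (i+1-j) * (cntV n i b : ℤ))
      + ((∑ i ∈ Icc (j+2) (n-2), epsI (i+1-(j+1)) * (cntV n i b : ℤ))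
      + (∑ i ∈ Icc (j+2) (n-2), epsI (i+1-(j+2)) * (cntV n i b : ℤ))) = 0 := by
    rw [← Finset.sum_add_distrib, ← Finset.sum_add_distrib]
    apply Finset.sum_eq_zero
    intro i hi
    rw [mem_Icc] at hi
    set m := i - j - 1 with hm
    have r1 : i+1-j = m+2 := by omega
    have r2 : i+1-(j+1) = m+1 := by omega
    have r3 : i+1-(j+2) = m := by omega
    rw [r1, r2, r3]
    linear_combination (cntV n i b : ℤ) * eps_cycle m
  linarith [hzero]

lemma lambda_formula (n b : ℕ) (hn : 2 ≤ n) :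
    ∀ t j, j ≤ n - 1 → n - 1 - j = t →
      (cntW n j b : ℤ) + ∑ i ∈ Icc j (n-2), epsI (i+1-j) * (cntV n i b : ℤ)
        = rhoI t * (cntE n b : ℤ) := by
  intro t
  induction t using Nat.strong_induction_on with
  | _ t ih =>
    intro j hj ht
    match t, ih with
    | 0, _ =>
      have hjj : j = n - 1 := by omega
      subst hjj
      have hempty : Icc (n-1) (n-2) = ∅ := Finset.Icc_eq_empty (by omega)
      rw [hempty, Finset.sum_empty, cntW_boundary _ b hn (by omega)]
      show (cntE n b : ℤ) + 0 = rhoI 0 * cntE n b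
      rw [show rhoI 0 = 1 from rfl]
      ring
    | 1, _ =>
      have hjj : j = n - 2 := by omega
      subst hjj
      have hIcc : Icc (n-2) (n-2) = {n-2} := Finset.Icc_self _
      rw [hIcc, Finset.sum_singleton, cntW_boundary _ b hn (by omega),
        cntV_boundary _ b hn (by omega)]
      have : epsI (n-2+1-(n-2)) = -1 := by
        have h1 : n-2+1-(n-2) = 1 := by omega
        rw [h1]; rfl
      rw [this, show rhoI 1 = 0 from rfl]
      ring
    | (t2+2), ih =>
      have hj3 : j + 3 ≤ n := by omega
      have IH1 := ih (t2+1) (by omega) (j+1) (by omega) (by omega)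
      have IH2 := ih t2 (by omega) (j+2) (by omega) (by omega)
      have h3 : (cntW n j b : ℤ) + (cntW n (j+1) b : ℤ) + (cntW n (j+2) b : ℤ)
          = (cntV n j b : ℤ) + (cntV n (j+1) b : ℤ) := by
        have := three_term n j b hj3
        exact_mod_cast congrArg (fun x : ℕ => (x : ℤ)) this
      have hts := telescope_sum n b j hj3
      have hrho := rho_cycle t2
      -- combine
      have goal : (cntW n j b : ℤ) + ∑ i ∈ Icc j (n-2), epsI (i+1-j) * (cntV n i b : ℤ)
          = rhoI (t2+2) * (cntE n b : ℤ) := by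
        rw [hrho]
        linarith [IH1, IH2, h3, hts]
      exact goal

end St18

namespace St18

open Finset Equiv

def betaI (n : ℕ) : ℤ := if n % 3 = 2 then 1 else if n % 3 = 0 ∧ 0 < n then -1 else 0

lemma eulerNum_zero : eulerNum 0 = 1 := by
  unfold eulerNum
  rw [card_congr_iff (Q := fun _ => True) (fun σ => by
    constructor
    · intro _; trivial
    · intro _ i _ h2; omega)]
  rw [Nat.card_congr (Equiv.subtypeUnivEquiv (fun _ => trivial)),
    Nat.card_eq_fintype_card, Fintype.card_perm, Fintype.card_fin]
  rfl

lemma rho_minus_eps (n : ℕ) (hn : 2 ≤ n) :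
    rhoI (n-1) - epsI (n-1) = betaI n := by
  unfold rhoI epsI betaI
  have h3 : n % 3 = 0 ∨ n % 3 = 1 ∨ n % 3 = 2 := by omega
  rcases h3 with h | h | h
  · rw [if_neg (by omega : ¬ (n-1) % 3 = 0), if_neg (by omega : ¬ (n-1) % 3 = 1),
      if_neg (by omega : ¬ (n-1) % 3 = 0), if_neg (by omega : ¬ (n-1) % 3 = 1),
      if_neg (by omega : ¬ n % 3 = 2), if_pos (⟨by omega, by omega⟩ : n % 3 = 0 ∧ 0 < n)]
    norm_num
  · rw [if_pos (by omega : (n-1) % 3 = 0), if_pos (by omega : (n-1) % 3 = 0),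
      if_neg (by omega : ¬ n % 3 = 2), if_neg (by omega : ¬ (n % 3 = 0 ∧ 0 < n))]
    norm_num
  · rw [if_neg (by omega : ¬ (n-1) % 3 = 0), if_pos (by omega : (n-1) % 3 = 1),
      if_neg (by omega : ¬ (n-1) % 3 = 0), if_pos (by omega : (n-1) % 3 = 1),
      if_pos (by omega : n % 3 = 2)]
    norm_num

/-- The main convolution identity, in integer form. -/
lemma main_id (n : ℕ) :
    (∑ k ∈ range (n+1),
        epsI k * (n.choose k : ℤ) * (eulerNum k : ℤ) * (dCount (n-k) : ℤ))
      = betaI n * (eulerNum n : ℤ) := by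
  rcases Nat.lt_or_ge n 2 with hn | hn
  · interval_cases n
    · simp [dCount_small 0 (by omega), betaI]
    · rw [show (1:ℕ)+1 = 2 from rfl, Finset.sum_range_succ, Finset.sum_range_succ]
      simp [dCount_small 0 (by omega), dCount_small 1 (by omega), betaI]
  · -- main case
    have key := lambda_formula n 0 hn (n-1) 0 (by omega) (by omega)
    rw [cntW_zero, ← dCount_eq_cntD n hn, cntE_eq_eulerNum] at key
    -- termwise description of the Λ-sum
    set f : ℕ → ℤ := fun k =>
      epsI k * (n.choose k : ℤ) * (eulerNum k : ℤ) * (dCount (n-k) : ℤ) with hf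
    have hterm : ∀ i ∈ Icc 0 (n-2), epsI (i+1-0) * (cntV n i 0 : ℤ)
        = f (i+1) + (if i = n-2 then epsI (n-1) * (eulerNum n : ℤ) else 0) := by
      intro i hi
      rw [mem_Icc] at hi
      have hi0 : i + 1 - 0 = i + 1 := by omega
      rw [hi0]
      rcases Nat.lt_or_ge i (n-2) with hlt | hge
      · -- i ≤ n-3, split applies
        rw [if_neg (by omega)]
        rw [cntV_split n i 0 (by omega), cntE_eq_eulerNum,
          cntD_eq_cntD_zero, ← dCount_eq_cntD _ (by omega)]
        simp only [hf]
        have : n - (i+1) = n - i - 1 := by omega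
        rw [this]
        push_cast
        ring
      · -- i = n-2
        have hi2 : i = n - 2 := by omega
        subst hi2
        rw [if_pos rfl, cntV_boundary _ 0 hn (by omega), cntE_eq_eulerNum]
        have hfz : f (n-2+1) = 0 := by
          simp only [hf]
          have : n - (n-2+1) = 1 := by omega
          rw [this, dCount_small 1 (by omega)]
          push_cast
          ring
        have : n - 2 + 1 = n - 1 := by omega
        rw [this] at hfz ⊢
        rw [hfz]
        ring
    rw [Finset.sum_congr rfl hterm, Finset.sum_add_distrib, Finset.sum_ite_eq' (Icc 0 (n-2))] at key
    rw [if_pos (by rw [mem_Icc]; omega)] at key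
    -- now rewrite the shifted sum as a sum over range (n+1)
    have hr : ∑ k ∈ range (n+1), f k
        = f 0 + ∑ i ∈ Icc 0 (n-2), f (i+1) := by
      have hrange : range (n+1) = Icc 0 n := by
        ext x
        simp only [mem_range, mem_Icc]
        omega
      rw [hrange, sum_Icc_bot (by omega) f]
      congr 1
      -- ∑ Icc 1 n f = ∑ Icc 0 (n-2) (f ∘ (+1))
      have h1 : ∑ k ∈ Icc 1 (n-1), f k = ∑ k ∈ Icc 1 n, f k := by
        apply Finset.sum_subset
        · intro x hx
          rw [mem_Icc] at *
          omega
        · intro x hx hnx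
          rw [mem_Icc] at hx hnx
          simp only [hf]
          rw [dCount_small (n - x) (by omega)]
          push_cast
          ring
      rw [← h1]
      -- reindex Icc 1 (n-1) = image of Icc 0 (n-2) under (+1)
      rw [show (1:ℕ) = 0 + 1 from rfl]
      have h2 : Icc (0+1) (n-1) = Finset.image (fun i => i + 1) (Icc 0 (n-2)) := by
        ext x
        simp only [mem_Icc, Finset.mem_image]
        constructor
        · intro hx
          exact ⟨x - 1, by omega, by omega⟩
        · rintro ⟨y, hy, rfl⟩
          omega
      rw [h2, Finset.sum_image (by intro a _ b _ h; simp only at h; omega)]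
    -- f 0 = dCount n
    have hf0 : f 0 = (dCount n : ℤ) := by
      simp only [hf]
      rw [eulerNum_zero, Nat.sub_zero, Nat.choose_zero_right]
      norm_num [epsI]
    rw [hr, hf0]
    have hre := rho_minus_eps n hn
    linear_combination key + (eulerNum n : ℤ) * hre

end St18
/-- in `ℚ⟦X⟧`,
`(Σₙ (E_{3n}·X^{3n}/(3n)! − E_{3n+1}·X^{3n+1}/(3n+1)!)) · (Σₙ d(n)·Xⁿ/n!)
  = Σₙ (E_{3n+2}·X^{3n+2}/(3n+2)! − E_{3n+3}·X^{3n+3}/(3n+3)!)`. -/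
theorem statement18 :
    (PowerSeries.mk (fun n : ℕ =>
        if n % 3 = 0 then (eulerNum n : ℚ) / n.factorial
        else if n % 3 = 1 then -((eulerNum n : ℚ) / n.factorial)
        else 0)) *
      (PowerSeries.mk (fun n : ℕ => (dCount n : ℚ) / n.factorial)) =
    PowerSeries.mk (fun n : ℕ =>
        if n % 3 = 2 then (eulerNum n : ℚ) / n.factorial
        else if n % 3 = 0 ∧ 0 < n then -((eulerNum n : ℚ) / n.factorial)
        else 0) := by
  apply PowerSeries.ext
  intro n
  rw [PowerSeries.coeff_mul, Finset.Nat.sum_antidiagonal_eq_sum_range_succ_mk]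
  simp only [PowerSeries.coeff_mk]
  have hn0 : (n.factorial : ℚ) ≠ 0 := Nat.cast_ne_zero.2 (Nat.factorial_ne_zero n)
  have hterm : ∀ k ∈ Finset.range (n+1),
      (if k % 3 = 0 then (eulerNum k : ℚ) / k.factorial
        else if k % 3 = 1 then -((eulerNum k : ℚ) / k.factorial) else 0)
        * ((dCount (n-k) : ℚ) / (n-k).factorial)
      = ((St18.epsI k * (n.choose k : ℤ) * (eulerNum k : ℤ) * (dCount (n-k) : ℤ) : ℤ) : ℚ)
          / (n.factorial : ℚ) := by
    intro k hk
    rw [Finset.mem_range] at hk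
    have hkn : k ≤ n := by omega
    have hk0 : (k.factorial : ℚ) ≠ 0 := Nat.cast_ne_zero.2 (Nat.factorial_ne_zero k)
    have hnk0 : ((n-k).factorial : ℚ) ≠ 0 := Nat.cast_ne_zero.2 (Nat.factorial_ne_zero (n-k))
    have hfac : (n.choose k : ℚ) * (k.factorial : ℚ) * ((n-k).factorial : ℚ)
        = (n.factorial : ℚ) := by
      exact_mod_cast congrArg (fun m : ℕ => (m : ℚ))
        (Nat.choose_mul_factorial_mul_factorial hkn)
    have h3 : k % 3 = 0 ∨ k % 3 = 1 ∨ k % 3 = 2 := by omega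
    rcases h3 with h | h | h
    · rw [if_pos h]
      have he : St18.epsI k = 1 := by unfold St18.epsI; rw [if_pos h]
      rw [he]
      rw [div_mul_div_comm, div_eq_div_iff (mul_ne_zero hk0 hnk0) hn0]
      push_cast
      linear_combination (-(eulerNum k : ℚ) * (dCount (n-k) : ℚ)) * hfac
    · rw [if_neg (by omega), if_pos h]
      have he : St18.epsI k = -1 := by unfold St18.epsI; rw [if_neg (by omega), if_pos h]
      rw [he]
      rw [neg_div' ]
      rw [div_mul_div_comm]
      rw [div_eq_div_iff (mul_ne_zero hk0 hnk0) hn0]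
      push_cast
      linear_combination ((eulerNum k : ℚ) * (dCount (n-k) : ℚ)) * hfac
    · rw [if_neg (by omega), if_neg (by omega)]
      have he : St18.epsI k = 0 := by
        unfold St18.epsI; rw [if_neg (by omega), if_neg (by omega)]
      rw [he]
      push_cast
      ring
  rw [Finset.sum_congr rfl hterm, ← Finset.sum_div, ← Int.cast_sum, St18.main_id n]
  -- now the right-hand side
  unfold St18.betaI
  by_cases h2 : n % 3 = 2
  · rw [if_pos h2, if_pos h2]
    push_cast
    ring
  · rw [if_neg h2, if_neg h2]
    by_cases h0 : n % 3 = 0 ∧ 0 < n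
    · rw [if_pos h0, if_pos h0]
      push_cast
      ring
    · rw [if_neg h0, if_neg h0]
      push_cast
      ring
end
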